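/- arXiv:1907.04645 — 5 statements merged into one kernel-verified Lean document; each statement's English description precedes it below -/
import Mathlib

section
/- If three points a, b, c in R^2 are collinear and b lies on the segment between a and c, then for any points a', c' in R^2, the distance from b to the line through a' and c' is at most the maximum of dist(a,a') and dist(c,c'). -/
open MeasureTheory Metric Real

noncomputable section

abbrev Pt := EuclideanSpace ℝ (Fin 2)

/-- Twice the signed area of the triangle `a b c`; its sign is the orientation. -/
def det3 (a b c : Pt) : ℝ :=
  (b 0 - a 0) * (c 1 - a 1) - (b 1 - a 1) * (c 0 - a 0)

/-- Orientation sign of an ordered triple of planar points. -/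
def ori (a b c : Pt) : ℝ := Real.sign (det3 a b c)

/-- The line through two points (as a subset of the plane). -/
def lineThrough (a b : Pt) : Set Pt := (affineSpan ℝ {a, b} : Set Pt)

/-- Distance from `x` to the line through `a` and `b`. -/
def distLine (x a b : Pt) : ℝ := Metric.infDist x (lineThrough a b)

/-- A triple is `w`-flat if some point is within distance `√2·w` of the
line through the other two. -/
def WFlat (w : ℝ) (p q r : Pt) : Prop :=
  distLine p q r ≤ Real.sqrt 2 * w ∨ distLine q p r ≤ Real.sqrt 2 * w ∨
    distLine r p q ≤ Real.sqrt 2 * w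

/-- The uniform probability measure on the closed disk of radius `δ` centered at `c`. -/
def unifDisk (c : Pt) (δ : ℝ) : Measure Pt :=
  (volume (Metric.closedBall c δ))⁻¹ • volume.restrict (Metric.closedBall c δ)

/-- Snapping a point to the nearest point of the grid `w·ℤ²`. -/
def snap (w : ℝ) (p : Pt) : Pt := WithLp.toLp 2 (fun i => w * (round (p i / w) : ℝ))

theorem stmt1 (a b c a' c' : Pt) (hb : b ∈ segment ℝ a c) (hne : a' ≠ c') :
    distLine b a' c' ≤ max (dist a a') (dist c c') := by
  obtain ⟨u, v, hu, hv, huv, hb⟩ := hb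
  set p : Pt := u • a' + v • c' with hp_def
  have hp : p ∈ lineThrough a' c' := by
    have h := AffineMap.lineMap_mem_affineSpan_pair (k := ℝ) v a' c'
    have : AffineMap.lineMap a' c' v = p := by
      simp [AffineMap.lineMap_apply, hp_def]
      have hu' : u = 1 - v := by linarith
      rw [hu']
      module
    rwa [this] at h
  have key : dist b p ≤ max (dist a a') (dist c c') := by
    have hbp : b - p = u • (a - a') + v • (c - c') := by
      rw [← hb, hp_def]; module
    rw [dist_eq_norm, hbp]
    calc ‖u • (a - a') + v • (c - c')‖ ≤ ‖u • (a - a')‖ + ‖v • (c - c')‖ :=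
          norm_add_le _ _
      _ = u * ‖a - a'‖ + v * ‖c - c'‖ := by
          rw [norm_smul, norm_smul, Real.norm_eq_abs, Real.norm_eq_abs,
            abs_of_nonneg hu, abs_of_nonneg hv]
      _ ≤ u * max (dist a a') (dist c c') + v * max (dist a a') (dist c c') := by
          gcongr
          · rw [← dist_eq_norm]; exact le_max_left _ _
          · rw [← dist_eq_norm]; exact le_max_right _ _
      _ = max (dist a a') (dist c c') := by rw [← add_mul, huv, one_mul]
  exact le_trans (Metric.infDist_le_dist_of_mem hp) key
end
end

section
/- Let w > 0 and let p, q, r in R^2 be a triple of points such that each of the three points has distance greater than √2·w from the line through the other two (in particular no two of them coincide). Let p', q', r' be points with dist(p,p') ≤ w/√2, dist(q,q') ≤ w/√2, dist(r,r') ≤ w/√2. Then the orientation of (p', q', r') equals the orientation of (p, q, r). -/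
open MeasureTheory Metric Real

noncomputable section

lemma comb_apply (u v : ℝ) (x y : Pt) (i : Fin 2) :
    (u • x + v • y) i = u * x i + v * y i := by
  simp [PiLp.add_apply, PiLp.smul_apply, smul_eq_mul]

lemma comb_eq (u v : ℝ) (x y z : Pt) (e0 : u * x 0 + v * y 0 = z 0)
    (e1 : u * x 1 + v * y 1 = z 1) : u • x + v • y = z := by
  ext i
  rw [comb_apply]
  fin_cases i
  · exact e0
  · exact e1

lemma det3_eq_zero_between {a b c : Pt} (h : det3 a b c = 0) :
    b ∈ segment ℝ a c ∨ a ∈ segment ℝ b c ∨ c ∈ segment ℝ a b := by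
  unfold det3 at h
  by_cases hb : b = a
  · exact Or.inl (hb ▸ left_mem_segment ℝ a c)
  have hex : ∃ t : ℝ, c 0 - a 0 = t * (b 0 - a 0) ∧ c 1 - a 1 = t * (b 1 - a 1) := by
    by_cases h0 : b 0 - a 0 = 0
    · have h1 : b 1 - a 1 ≠ 0 := by
        intro h1
        apply hb
        ext i
        fin_cases i
        · show b 0 = a 0; linarith
        · show b 1 = a 1; linarith
      refine ⟨(c 1 - a 1) / (b 1 - a 1), ?_, by field_simp⟩
      have hc0 : c 0 - a 0 = 0 := by
        rw [h0] at h
        have h2 : (b 1 - a 1) * (c 0 - a 0) = 0 := by linarith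
        rcases mul_eq_zero.mp h2 with h3 | h3
        · exact absurd h3 h1
        · exact h3
      rw [hc0, h0, mul_zero]
    · refine ⟨(c 0 - a 0) / (b 0 - a 0), by field_simp, ?_⟩
      rw [div_mul_eq_mul_div, eq_div_iff h0]
      linear_combination h
  obtain ⟨t, ht0, ht1⟩ := hex
  rcases le_or_gt t 0 with htle | htpos
  · right; left
    have h1t : (0:ℝ) < 1 - t := by linarith
    refine ⟨-t / (1 - t), 1 / (1 - t),
      div_nonneg (by linarith) (by linarith), by positivity,
      by field_simp; ring, comb_eq _ _ _ _ _ ?_ ?_⟩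
    · field_simp; linear_combination ht0
    · field_simp; linear_combination ht1
  rcases le_or_gt t 1 with htle1 | htgt1
  · right; right
    exact ⟨1 - t, t, by linarith, le_of_lt htpos, by ring,
      comb_eq _ _ _ _ _ (by linarith) (by linarith)⟩
  · left
    have htne : t ≠ 0 := ne_of_gt htpos
    refine ⟨1 - 1 / t, 1 / t, ?_, by positivity, by ring,
      comb_eq _ _ _ _ _ ?_ ?_⟩
    · have : 1 / t ≤ 1 := by rw [div_le_one htpos]; linarith
      linarith
    · field_simp; linear_combination ht0
    · field_simp; linear_combination ht1

lemma infDist_segment_le {s : Set Pt} (hs : Convex ℝ s) (hne : s.Nonempty) {a c x : Pt}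
    (hx : x ∈ segment ℝ a c) {d : ℝ} (ha : infDist a s ≤ d) (hc : infDist c s ≤ d) :
    infDist x s ≤ d := by
  obtain ⟨u, v, hu, hv, huv, hxe⟩ := hx
  refine le_of_forall_pos_le_add fun ε hε => ?_
  obtain ⟨ya, hya, hda⟩ := (Metric.infDist_lt_iff hne).mp
    (lt_of_le_of_lt ha (by linarith : d < d + ε))
  obtain ⟨yc, hyc, hdc⟩ := (Metric.infDist_lt_iff hne).mp
    (lt_of_le_of_lt hc (by linarith : d < d + ε))
  have hmem : u • ya + v • yc ∈ s := hs hya hyc hu hv huv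
  have hdiff : x - (u • ya + v • yc) = u • (a - ya) + v • (c - yc) := by
    rw [← hxe]; module
  have hd : dist x (u • ya + v • yc) ≤ u * dist a ya + v * dist c yc := by
    rw [dist_eq_norm, hdiff]
    calc ‖u • (a - ya) + v • (c - yc)‖ ≤ ‖u • (a - ya)‖ + ‖v • (c - yc)‖ := norm_add_le _ _
      _ = u * dist a ya + v * dist c yc := by
          rw [norm_smul, norm_smul, Real.norm_of_nonneg hu, Real.norm_of_nonneg hv,
            dist_eq_norm, dist_eq_norm]
  calc infDist x s ≤ dist x (u • ya + v • yc) := infDist_le_dist_of_mem hmem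
    _ ≤ u * dist a ya + v * dist c yc := hd
    _ ≤ u * (d + ε) + v * (d + ε) := by
        have h1 : dist a ya ≤ d + ε := hda.le
        have h2 : dist c yc ≤ d + ε := hdc.le
        have := mul_le_mul_of_nonneg_left h1 hu
        have := mul_le_mul_of_nonneg_left h2 hv
        linarith
    _ = d + ε := by rw [← add_mul, huv, one_mul]

lemma flat_of_between {δ : ℝ} {x y z x' y' z' : Pt}
    (hx : dist x x' ≤ δ) (hy : dist y y' ≤ δ) (hz : dist z z' ≤ δ)
    (hmid : y' ∈ segment ℝ x' z') : distLine y x z ≤ 2 * δ := by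
  have hxL : x ∈ lineThrough x z := subset_affineSpan ℝ _ (Set.mem_insert _ _)
  have hzL : z ∈ lineThrough x z := subset_affineSpan ℝ _ (by simp)
  have hne : (lineThrough x z).Nonempty := ⟨x, hxL⟩
  have hconv : Convex ℝ (lineThrough x z) := (affineSpan ℝ {x, z}).convex
  have h1 : infDist x' (lineThrough x z) ≤ δ :=
    le_trans (infDist_le_dist_of_mem hxL) (by rw [dist_comm]; exact hx)
  have h2 : infDist z' (lineThrough x z) ≤ δ :=
    le_trans (infDist_le_dist_of_mem hzL) (by rw [dist_comm]; exact hz)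
  have h3 : infDist y' (lineThrough x z) ≤ δ := infDist_segment_le hconv hne hmid h1 h2
  calc distLine y x z ≤ infDist y' (lineThrough x z) + dist y y' :=
        Metric.infDist_le_infDist_add_dist
    _ ≤ δ + δ := add_le_add h3 hy
    _ = 2 * δ := by ring

lemma sign_eq_of_no_zero {f : ℝ → ℝ} (hc : ContinuousOn f (Set.Icc 0 1))
    (h : ∀ t ∈ Set.Icc (0:ℝ) 1, f t ≠ 0) : Real.sign (f 1) = Real.sign (f 0) := by
  have h0 := h 0 (by norm_num)
  have h1 := h 1 (by norm_num)
  rcases h0.lt_or_gt with hf0 | hf0 <;> rcases h1.lt_or_gt with hf1 | hf1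
  · rw [Real.sign_of_neg hf0, Real.sign_of_neg hf1]
  · exfalso
    obtain ⟨t, ht, hft⟩ := intermediate_value_Icc (by norm_num : (0:ℝ) ≤ 1) hc
      ⟨hf0.le, hf1.le⟩
    exact h t ht hft
  · exfalso
    obtain ⟨t, ht, hft⟩ := intermediate_value_Icc' (by norm_num : (0:ℝ) ≤ 1) hc
      ⟨hf1.le, hf0.le⟩
    exact h t ht hft
  · rw [Real.sign_of_pos hf0, Real.sign_of_pos hf1]

lemma interp_apply (x y : Pt) (t : ℝ) (i : Fin 2) :
    (x + t • (y - x)) i = x i + t * (y i - x i) := by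
  simp [PiLp.add_apply, PiLp.smul_apply, PiLp.sub_apply, smul_eq_mul]

lemma interp_dist (x y : Pt) {t : ℝ} (ht : t ∈ Set.Icc (0:ℝ) 1) :
    dist x (x + t • (y - x)) ≤ dist x y := by
  have : dist x (x + t • (y - x)) = |t| * ‖y - x‖ := by
    rw [dist_eq_norm]
    simp [norm_smul, Real.norm_eq_abs]
  rw [this, dist_eq_norm, norm_sub_rev x y]
  calc |t| * ‖y - x‖ ≤ 1 * ‖y - x‖ := by
        apply mul_le_mul_of_nonneg_right _ (norm_nonneg _)
        rw [abs_le]; exact ⟨by linarith [ht.1], ht.2⟩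
    _ = ‖y - x‖ := one_mul _


theorem stmt2 (w : ℝ) (hw : 0 < w) (p q r p' q' r' : Pt)
    (hp : Real.sqrt 2 * w < distLine p q r)
    (hq : Real.sqrt 2 * w < distLine q p r)
    (hr : Real.sqrt 2 * w < distLine r p q)
    (hp' : dist p p' ≤ w / Real.sqrt 2)
    (hq' : dist q q' ≤ w / Real.sqrt 2)
    (hr' : dist r r' ≤ w / Real.sqrt 2) :
    ori p' q' r' = ori p q r := by
  set δ : ℝ := w / Real.sqrt 2 with hδ
  have hsqrt : Real.sqrt 2 * Real.sqrt 2 = 2 := Real.mul_self_sqrt (by norm_num)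
  have hspos : (0:ℝ) < Real.sqrt 2 := by positivity
  have h2δ : 2 * δ = Real.sqrt 2 * w := by
    rw [hδ]
    field_simp
    linear_combination -hsqrt
  set f : ℝ → ℝ := fun t =>
    det3 (p + t • (p' - p)) (q + t • (q' - q)) (r + t • (r' - r)) with hf
  have key : ∀ t ∈ Set.Icc (0:ℝ) 1, f t ≠ 0 := by
    intro t ht hzero
    have hdp : dist p (p + t • (p' - p)) ≤ δ := le_trans (interp_dist p p' ht) hp'
    have hdq : dist q (q + t • (q' - q)) ≤ δ := le_trans (interp_dist q q' ht) hq'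
    have hdr : dist r (r + t • (r' - r)) ≤ δ := le_trans (interp_dist r r' ht) hr'
    rcases det3_eq_zero_between hzero with hmid | hmid | hmid
    · exact absurd (flat_of_between hdp hdq hdr hmid) (not_le.mpr (h2δ ▸ hq))
    · exact absurd (flat_of_between hdq hdp hdr hmid) (not_le.mpr (h2δ ▸ hp))
    · exact absurd (flat_of_between hdp hdr hdq hmid) (not_le.mpr (h2δ ▸ hr))
  have hcont : ContinuousOn f (Set.Icc 0 1) := by
    apply Continuous.continuousOn
    simp only [hf, det3, interp_apply]
    continuity
  have hsign := sign_eq_of_no_zero hcont key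
  have e1 : ∀ x y : Pt, x + (1:ℝ) • (y - x) = y := fun x y => by module
  have e0 : ∀ x y : Pt, x + (0:ℝ) • (y - x) = x := fun x y => by module
  have hf1 : f 1 = det3 p' q' r' := by rw [hf]; simp only [e1]
  have hf0 : f 0 = det3 p q r := by rw [hf]; simp only [e0]
  rw [hf1, hf0] at hsign
  exact hsign
end
end

section
/- Let p, q, r be three independent random points, each distributed uniformly on (possibly different) disks of radius δ > 0 in R^2, and let w > 0. Then the probability that the triple (p,q,r) is w-flat is at most 6·(2√2 w)/(π δ) ≤ 6·(2w)/δ, i.e., at most 12√2 w/(π δ). -/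
open MeasureTheory Metric Real
open scoped RealInnerProductSpace ENNReal

noncomputable section

lemma mem_lineThrough_iff {a b y : Pt} : y ∈ lineThrough a b ↔ ∃ t : ℝ, y = AffineMap.lineMap a b t := by
  constructor
  · intro h
    have h' : (y -ᵥ a) +ᵥ a ∈ line[ℝ, a, b] := by rwa [vsub_vadd]
    rw [vadd_left_mem_affineSpan_pair] at h'
    obtain ⟨r, hr⟩ := h'
    exact ⟨r, by rw [AffineMap.lineMap_apply, hr, vsub_vadd]⟩
  · rintro ⟨t, rfl⟩
    exact AffineMap.lineMap_mem_affineSpan_pair t a b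

lemma distLine_eq_iInf (x a b : Pt) :
    distLine x a b = ⨅ q : ℚ, dist x (AffineMap.lineMap a b (q : ℝ)) := by
  have hbdd : BddBelow (Set.range fun q : ℚ => dist x (AffineMap.lineMap a b (q : ℝ))) :=
    ⟨0, by rintro r ⟨q, rfl⟩; exact dist_nonneg⟩
  apply le_antisymm
  · exact le_ciInf fun q => Metric.infDist_le_dist_of_mem (AffineMap.lineMap_mem_affineSpan_pair _ a b)
  · rw [distLine, Metric.infDist_eq_iInf]
    haveI : Nonempty (lineThrough a b) := ⟨a, left_mem_affineSpan_pair ℝ a b⟩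
    refine le_ciInf fun y => ?_
    obtain ⟨t, ht⟩ := mem_lineThrough_iff.mp y.2
    rw [ht]
    have hc : Continuous fun t : ℝ => dist x (AffineMap.lineMap a b t) :=
      continuous_const.dist ((AffineMap.lineMap a b : ℝ →ᵃ[ℝ] Pt).continuous_of_finiteDimensional)
    obtain ⟨u, hu, hlim⟩ := mem_closure_iff_seq_limit.mp (by
      rw [Rat.denseRange_cast.closure_eq]; trivial :
        t ∈ closure (Set.range ((↑) : ℚ → ℝ)))
    refine ge_of_tendsto ((hc.continuousAt).tendsto.comp hlim) (Filter.Eventually.of_forall fun n => ?_)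
    obtain ⟨q, hq⟩ := hu n
    calc (⨅ q : ℚ, dist x (AffineMap.lineMap a b (q:ℝ))) ≤ dist x (AffineMap.lineMap a b (q:ℝ)) := ciInf_le hbdd q
      _ = _ := by rw [hq]; rfl

lemma measurable_distLine' {α : Type*} [MeasurableSpace α] {u v w : α → Pt}
    (hu : Measurable u) (hv : Measurable v) (hw : Measurable w) :
    Measurable fun x => distLine (u x) (v x) (w x) := by
  simp_rw [distLine_eq_iInf]
  refine Measurable.iInf fun q => ?_
  have h : ∀ x, AffineMap.lineMap (v x) (w x) ((q : ℝ)) = (1 - (q : ℝ)) • v x + (q : ℝ) • w x :=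
    fun x => AffineMap.lineMap_apply_module _ _ _
  simp_rw [h]
  fun_prop

lemma exists_normal (a b : Pt) :
    ∃ n : Pt, ‖n‖ = 1 ∧ ⟪b - a, n⟫ = 0 := by
  by_cases hd : b - a = 0
  · exact ⟨EuclideanSpace.single 0 1, by simp [EuclideanSpace.norm_single], by simp [hd]⟩
  · set d : Pt := b - a with hdef
    set v : Pt := (WithLp.equiv 2 (Fin 2 → ℝ)).symm ![-(d 1), d 0] with hv
    have hv0 : v 0 = -(d 1) := rfl
    have hv1 : v 1 = d 0 := rfl
    have hnv : ‖v‖ = ‖d‖ := by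
      rw [EuclideanSpace.norm_eq, EuclideanSpace.norm_eq]
      simp [Fin.sum_univ_two, hv0, hv1]
      ring_nf
    have hdn : ‖d‖ ≠ 0 := norm_ne_zero_iff.mpr hd
    refine ⟨‖d‖⁻¹ • v, ?_, ?_⟩
    · rw [norm_smul, hnv, norm_inv, norm_norm, inv_mul_cancel₀ hdn]
    · rw [inner_smul_right]
      have : ⟪d, v⟫ = 0 := by
        rw [PiLp.inner_apply, Fin.sum_univ_two]
        simp [hv0, hv1, RCLike.inner_apply]
        ring
      rw [this, mul_zero]

lemma inner_le_of_distLine_le {a b x n : Pt} {s : ℝ} (hn : ⟪b - a, n⟫ = 0) (hn1 : ‖n‖ = 1)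
    (h : distLine x a b ≤ s) : |⟪x, n⟫ - ⟪a, n⟫| ≤ s := by
  have key : ∀ y ∈ lineThrough a b, ⟪y, n⟫ = ⟪a, n⟫ := by
    intro y hy
    obtain ⟨t, rfl⟩ := mem_lineThrough_iff.mp hy
    rw [AffineMap.lineMap_apply_module]
    rw [inner_sub_left] at hn
    rw [inner_add_left, inner_smul_left, inner_smul_left]
    simp only [RCLike.star_def, conj_trivial]
    have hB : ⟪b, n⟫ = ⟪a, n⟫ := by linarith
    rw [hB]; ring
  have hle : |⟪x, n⟫ - ⟪a, n⟫| ≤ infDist x (lineThrough a b) := by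
    rw [Metric.infDist_eq_iInf]
    haveI : Nonempty (lineThrough a b) := ⟨a, left_mem_affineSpan_pair ℝ a b⟩
    refine le_ciInf fun y => ?_
    calc |⟪x, n⟫ - ⟪a, n⟫| = |⟪x - (y : Pt), n⟫| := by
          rw [inner_sub_left, key y y.2]
      _ ≤ ‖x - (y : Pt)‖ * ‖n‖ := abs_real_inner_le_norm _ _
      _ = dist x y := by rw [hn1, mul_one, dist_eq_norm]
  exact hle.trans h

lemma volume_strip_inter_ball {n : Pt} (hn : ‖n‖ = 1) (t s δ : ℝ) (hs : 0 ≤ s) (hδ0 : 0 ≤ δ) (c : Pt) :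
    volume {x : Pt | |⟪x, n⟫ - t| ≤ s ∧ x ∈ closedBall c δ} ≤ ENNReal.ofReal ((2 * s) * (2 * δ)) := by
  -- build an orthonormal basis (n, m)
  set m : Pt := (WithLp.equiv 2 (Fin 2 → ℝ)).symm ![n 1, -(n 0)] with hm
  have hm0 : m 0 = n 1 := rfl
  have hm1 : m 1 = -(n 0) := rfl
  have hsum : n 0 ^ 2 + n 1 ^ 2 = 1 := by
    have := hn
    rw [EuclideanSpace.norm_eq, Fin.sum_univ_two] at this
    have h2 : Real.sqrt (‖n 0‖ ^ 2 + ‖n 1‖ ^ 2) ^ 2 = 1 := by rw [this]; norm_num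
    rw [Real.sq_sqrt (by positivity)] at h2
    simpa [sq_abs] using h2
  have hinner_nn : ⟪n, n⟫ = 1 := by
    rw [real_inner_self_eq_norm_sq, hn]; norm_num
  have hinner_mm : ⟪m, m⟫ = 1 := by
    rw [PiLp.inner_apply, Fin.sum_univ_two]
    simp only [RCLike.inner_apply, conj_trivial, hm0, hm1]
    nlinarith [hsum]
  have hinner_nm : ⟪n, m⟫ = 0 := by
    rw [PiLp.inner_apply, Fin.sum_univ_two]
    simp only [RCLike.inner_apply, conj_trivial, hm0, hm1]
    ring
  have hon : Orthonormal ℝ ![n, m] := by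
    have hmnorm : ‖m‖ = 1 := by
      have h := real_inner_self_eq_norm_sq m
      rw [hinner_mm] at h
      nlinarith [norm_nonneg m]
    rw [orthonormal_iff_ite]
    intro i j
    fin_cases i <;> fin_cases j <;>
      simp [hinner_nn, hinner_mm, hinner_nm, real_inner_comm n m, hn, hmnorm]
  have hspan : ⊤ ≤ Submodule.span ℝ (Set.range ![n, m]) := by
    rw [hon.linearIndependent.span_eq_top_of_card_eq_finrank]
    · simp [finrank_euclideanSpace_fin]
  set B : OrthonormalBasis (Fin 2) ℝ Pt := OrthonormalBasis.mk hon hspan with hB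
  have hB0 : B 0 = n := by rw [hB, OrthonormalBasis.coe_mk]; rfl
  have hrepr : ∀ x : Pt, B.repr x 0 = ⟪x, n⟫ := by
    intro x
    rw [OrthonormalBasis.repr_apply_apply, hB0, real_inner_comm]
  set u : ℝ := B.repr c 1 with hu
  set T : Set (EuclideanSpace ℝ (Fin 2)) :=
    {y | y 0 ∈ Set.Icc (t - s) (t + s) ∧ y 1 ∈ Set.Icc (u - δ) (u + δ)} with hT
  have hsub : {x : Pt | |⟪x, n⟫ - t| ≤ s ∧ x ∈ closedBall c δ} ⊆ ⇑B.repr ⁻¹' T := by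
    rintro x ⟨h1, h2⟩
    constructor
    · rw [hrepr x]
      rw [abs_le] at h1
      constructor <;> linarith [h1.1, h1.2]
    · have hcoord : |B.repr x 1 - u| ≤ ‖B.repr x - B.repr c‖ := by
        have : B.repr x 1 - u = (B.repr x - B.repr c) 1 := by simp [hu]
        rw [this, EuclideanSpace.norm_eq, Fin.sum_univ_two]
        rw [← Real.sqrt_sq (abs_nonneg ((B.repr x - B.repr c) 1))]
        apply Real.sqrt_le_sqrt
        rw [sq_abs]
        have := sq_nonneg (‖(B.repr x - B.repr c) 0‖)
        simp only [Real.norm_eq_abs, sq_abs]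
        nlinarith
      have hd : ‖B.repr x - B.repr c‖ ≤ δ := by
        rw [← map_sub, B.repr.norm_map, ← dist_eq_norm]
        exact h2
      have := hcoord.trans hd
      rw [abs_le] at this
      constructor <;> linarith [this.1, this.2]
  have hTmeas : MeasurableSet T := by
    apply MeasurableSet.inter
    · exact measurableSet_Icc.preimage ((measurable_pi_apply (0 : Fin 2)).comp (WithLp.measurable_ofLp 2 _))
    · exact measurableSet_Icc.preimage ((measurable_pi_apply (1 : Fin 2)).comp (WithLp.measurable_ofLp 2 _))
  calc volume {x : Pt | |⟪x, n⟫ - t| ≤ s ∧ x ∈ closedBall c δ}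
      ≤ volume (⇑B.repr ⁻¹' T) := measure_mono hsub
    _ = volume T := B.measurePreserving_repr.measure_preimage hTmeas.nullMeasurableSet
    _ ≤ ENNReal.ofReal ((2 * s) * (2 * δ)) := by
        have hTeq : T = (MeasurableEquiv.toLp 2 (Fin 2 → ℝ)).symm ⁻¹'
            (Set.univ.pi ![Set.Icc (t - s) (t + s), Set.Icc (u - δ) (u + δ)]) := by
          ext y
          simp [Set.mem_pi, Fin.forall_fin_two, hT, MeasurableEquiv.toLp_symm_apply]
        rw [hTeq, (EuclideanSpace.volume_preserving_symm_measurableEquiv_toLp (ι := Fin 2)).measure_preimage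
          (MeasurableSet.univ_pi (fun i => by fin_cases i <;> exact measurableSet_Icc)).nullMeasurableSet]
        rw [volume_pi_pi]
        rw [Fin.prod_univ_two]
        simp only [Matrix.cons_val_zero, Matrix.cons_val_one, Matrix.head_cons, Real.volume_Icc]
        rw [← ENNReal.ofReal_mul (by linarith)]
        apply ENNReal.ofReal_le_ofReal
        apply le_of_eq; ring

lemma volume_disk {δ : ℝ} (hδ : 0 < δ) (c : Pt) :
    volume (closedBall c δ) = ENNReal.ofReal (π * δ ^ 2) := by
  rw [EuclideanSpace.volume_closedBall]
  have hcard : Fintype.card (Fin 2) = 2 := Fintype.card_fin 2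
  rw [hcard]
  have hG : Real.Gamma (((2 : ℕ) : ℝ) / 2 + 1) = 1 := by
    rw [show ((2 : ℕ) : ℝ) / 2 + 1 = (1 : ℝ) + 1 by norm_num,
      Real.Gamma_add_one one_ne_zero, Real.Gamma_one, mul_one]
  rw [hG, div_one, Real.sq_sqrt Real.pi_nonneg,
    ← ENNReal.ofReal_pow hδ.le, ← ENNReal.ofReal_mul (by positivity)]
  rw [mul_comm]

lemma unifDisk_strip {δ s : ℝ} (hδ : 0 < δ) (hs : 0 ≤ s) (c a b : Pt) :
    unifDisk c δ {x | distLine x a b ≤ s} ≤ ENNReal.ofReal (4 * s / (π * δ)) := by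
  obtain ⟨n, hn1, horth⟩ := exists_normal a b
  have hsub : {x : Pt | distLine x a b ≤ s} ∩ closedBall c δ ⊆
      {x : Pt | |⟪x, n⟫ - ⟪a, n⟫| ≤ s ∧ x ∈ closedBall c δ} := by
    rintro x ⟨h1, h2⟩
    exact ⟨inner_le_of_distLine_le horth hn1 h1, h2⟩
  have hvol : volume ({x : Pt | distLine x a b ≤ s} ∩ closedBall c δ) ≤
      ENNReal.ofReal ((2 * s) * (2 * δ)) :=
    (measure_mono hsub).trans (volume_strip_inter_ball hn1 _ s δ hs hδ.le c)
  rw [unifDisk, Measure.smul_apply, smul_eq_mul,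
    Measure.restrict_apply' measurableSet_closedBall, volume_disk hδ]
  calc (ENNReal.ofReal (π * δ ^ 2))⁻¹ * volume ({x : Pt | distLine x a b ≤ s} ∩ closedBall c δ)
      ≤ (ENNReal.ofReal (π * δ ^ 2))⁻¹ * ENNReal.ofReal ((2 * s) * (2 * δ)) := by
        exact mul_le_mul_right hvol _
    _ = ENNReal.ofReal (4 * s / (π * δ)) := by
        rw [← ENNReal.ofReal_inv_of_pos (by positivity), ← ENNReal.ofReal_mul (by positivity)]
        congr 1
        field_simp
        ring

theorem unifDisk_prob {δ : ℝ} (c : Pt) (hδ : Fact (0 < δ)) : IsProbabilityMeasure (unifDisk c δ) := by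
  constructor
  rw [unifDisk, Measure.smul_apply, smul_eq_mul, Measure.restrict_apply' measurableSet_closedBall,
    Set.univ_inter, volume_disk hδ.out]
  exact ENNReal.inv_mul_cancel (ENNReal.ofReal_pos.mpr (by have := hδ.out; positivity)).ne' ENNReal.ofReal_ne_top

lemma measurable_distLine3 {i j k : Fin 3} :
    Measurable fun f : Fin 3 → Pt => distLine (f i) (f j) (f k) :=
  measurable_distLine' (measurable_pi_apply i) (measurable_pi_apply j) (measurable_pi_apply k)

lemma pi_event_le (μ : Fin 3 → Measure Pt) [∀ i, IsProbabilityMeasure (μ i)]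
    {s : ℝ} {A : ℝ≥0∞} (hA : ∀ i a b, μ i {x | distLine x a b ≤ s} ≤ A) (i : Fin 3) :
    Measure.pi μ {f | distLine (f i) (f (i.succAbove 0)) (f (i.succAbove 1)) ≤ s} ≤ A := by
  set e := MeasurableEquiv.piFinSuccAbove (fun _ : Fin 3 => Pt) i with he
  set S : Set (Pt × (Fin 2 → Pt)) := {p | distLine p.1 (p.2 0) (p.2 1) ≤ s} with hS
  have hSmeas : MeasurableSet S := by
    have hm : Measurable fun p : Pt × (Fin 2 → Pt) => distLine p.1 (p.2 0) (p.2 1) :=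
      measurable_distLine' measurable_fst ((measurable_pi_apply 0).comp measurable_snd)
        ((measurable_pi_apply 1).comp measurable_snd)
    exact measurableSet_le hm measurable_const
  have hpre : {f : Fin 3 → Pt | distLine (f i) (f (i.succAbove 0)) (f (i.succAbove 1)) ≤ s}
      = e ⁻¹' S := rfl
  rw [hpre, (measurePreserving_piFinSuccAbove μ i).measure_preimage hSmeas.nullMeasurableSet,
    Measure.prod_apply_symm hSmeas]
  calc ∫⁻ g, (μ i) ((fun x => (x, g)) ⁻¹' S) ∂(Measure.pi fun j => μ (i.succAbove j))
      ≤ ∫⁻ g, A ∂(Measure.pi fun j => μ (i.succAbove j)) :=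
        lintegral_mono fun g => hA i (g 0) (g 1)
    _ = A := by rw [lintegral_const, measure_univ, mul_one]


theorem stmt6 (δ w : ℝ) (hδ : 0 < δ) (hw : 0 < w) (c : Fin 3 → Pt) :
    Measure.pi (fun i => unifDisk (c i) δ)
        {f : Fin 3 → Pt | WFlat w (f 0) (f 1) (f 2)} ≤
      ENNReal.ofReal (12 * Real.sqrt 2 * w / (π * δ)) := by
  set s : ℝ := Real.sqrt 2 * w with hsdef
  have hs : 0 ≤ s := by positivity
  set μ : Fin 3 → Measure Pt := fun i => unifDisk (c i) δ with hμ
  haveI : ∀ i, IsProbabilityMeasure (μ i) := fun i => unifDisk_prob (c i) ⟨hδ⟩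
  set A : ℝ≥0∞ := ENNReal.ofReal (4 * s / (π * δ)) with hA
  have hb : ∀ i a b, μ i {x | distLine x a b ≤ s} ≤ A := fun i => unifDisk_strip hδ hs (c i)
  have h0 := pi_event_le μ hb 0
  have h1 := pi_event_le μ hb 1
  have h2 := pi_event_le μ hb 2
  have e00 : (0 : Fin 3).succAbove 0 = 1 := rfl
  have e01 : (0 : Fin 3).succAbove 1 = 2 := rfl
  have e10 : (1 : Fin 3).succAbove 0 = 0 := rfl
  have e11 : (1 : Fin 3).succAbove 1 = 2 := rfl
  have e20 : (2 : Fin 3).succAbove 0 = 0 := rfl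
  have e21 : (2 : Fin 3).succAbove 1 = 1 := rfl
  rw [e00, e01] at h0
  rw [e10, e11] at h1
  rw [e20, e21] at h2
  have hsub : {f : Fin 3 → Pt | WFlat w (f 0) (f 1) (f 2)} ⊆
      {f : Fin 3 → Pt | distLine (f 0) (f 1) (f 2) ≤ s} ∪
        ({f : Fin 3 → Pt | distLine (f 1) (f 0) (f 2) ≤ s} ∪
          {f : Fin 3 → Pt | distLine (f 2) (f 0) (f 1) ≤ s}) := by
    intro f hf
    rcases hf with h | h | h
    · exact Or.inl h
    · exact Or.inr (Or.inl h)
    · exact Or.inr (Or.inr h)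
  calc Measure.pi μ {f : Fin 3 → Pt | WFlat w (f 0) (f 1) (f 2)}
      ≤ Measure.pi μ ({f : Fin 3 → Pt | distLine (f 0) (f 1) (f 2) ≤ s} ∪
        ({f | distLine (f 1) (f 0) (f 2) ≤ s} ∪ {f | distLine (f 2) (f 0) (f 1) ≤ s})) :=
        measure_mono hsub
    _ ≤ Measure.pi μ {f : Fin 3 → Pt | distLine (f 0) (f 1) (f 2) ≤ s} +
        (Measure.pi μ {f : Fin 3 → Pt | distLine (f 1) (f 0) (f 2) ≤ s} +
          Measure.pi μ {f : Fin 3 → Pt | distLine (f 2) (f 0) (f 1) ≤ s}) :=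
        le_trans (measure_union_le _ _) (add_le_add_right (measure_union_le _ _) _)
    _ ≤ A + (A + A) := add_le_add h0 (add_le_add h1 h2)
    _ ≤ ENNReal.ofReal (12 * Real.sqrt 2 * w / (π * δ)) := by
        rw [hA, ← ENNReal.ofReal_add (by positivity) (by positivity),
          ← ENNReal.ofReal_add (by positivity) (by positivity)]
        apply ENNReal.ofReal_le_ofReal
        rw [hsdef]
        apply le_of_eq
        field_simp
        ring
end
end

section
/- Let P_x = (p_1,...,p_n) be n independent random points, each uniform on a disk of radius δ > 0, and let p ∈ (0,1]. With probability at least 1 − p, snapping all points of P_x onto the grid of width w = pδ/n³ (each point to its nearest grid point) yields a point set with the same order type as P_x, i.e., every triple of original points has the same orientation as the corresponding triple of snapped points. -/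
open MeasureTheory Metric Real

noncomputable section

namespace Stmt8

/-- coordinates w.r.t. a rotated frame -/
def XX (u0 u1 : ℝ) (p : Pt) : ℝ := p 0 * u0 + p 1 * u1
def YY (u0 u1 : ℝ) (p : Pt) : ℝ := -(p 0) * u1 + p 1 * u0

lemma dist_pt (x y : Pt) : dist x y = Real.sqrt ((x 0 - y 0)^2 + (x 1 - y 1)^2) := by
  simp [EuclideanSpace.dist_eq, Fin.sum_univ_two, Real.dist_eq, sq_abs]

variable {u0 u1 : ℝ}

lemma frame_sq (hu : u0^2 + u1^2 = 1) (p q : Pt) :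
    (XX u0 u1 p - XX u0 u1 q)^2 + (YY u0 u1 p - YY u0 u1 q)^2
      = (p 0 - q 0)^2 + (p 1 - q 1)^2 := by
  unfold XX YY
  linear_combination ((p 0 - q 0)^2 + (p 1 - q 1)^2) * hu

lemma dist_sq (hu : u0^2 + u1^2 = 1) (p q : Pt) :
    dist p q = Real.sqrt ((XX u0 u1 p - XX u0 u1 q)^2 + (YY u0 u1 p - YY u0 u1 q)^2) := by
  rw [dist_pt, frame_sq hu]

lemma abs_YY_le_dist (hu : u0^2 + u1^2 = 1) (p q : Pt) :
    |YY u0 u1 p - YY u0 u1 q| ≤ dist p q := by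
  rw [dist_sq hu, ← Real.sqrt_sq_eq_abs]
  exact Real.sqrt_le_sqrt (by nlinarith [sq_nonneg (XX u0 u1 p - XX u0 u1 q)])

lemma abs_XX_le_dist (hu : u0^2 + u1^2 = 1) (p q : Pt) :
    |XX u0 u1 p - XX u0 u1 q| ≤ dist p q := by
  rw [dist_sq hu, ← Real.sqrt_sq_eq_abs]
  exact Real.sqrt_le_sqrt (by nlinarith [sq_nonneg (YY u0 u1 p - YY u0 u1 q)])

lemma pt_eq_of_sq (p q : Pt) (h : (p 0 - q 0)^2 + (p 1 - q 1)^2 = 0) : p = q := by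
  have h0 : p 0 = q 0 := by nlinarith [sq_nonneg (p 0 - q 0), sq_nonneg (p 1 - q 1)]
  have h1 : p 1 = q 1 := by nlinarith [sq_nonneg (p 0 - q 0), sq_nonneg (p 1 - q 1)]
  ext i
  fin_cases i <;> assumption

lemma mem_lineThrough (τ : ℝ) (p r : Pt) :
    (WithLp.toLp 2 (fun i => p i + τ * (r i - p i)) : Pt) ∈ lineThrough p r := by
  have : (WithLp.toLp 2 (fun i => p i + τ * (r i - p i)) : Pt) = AffineMap.lineMap p r τ := by
    ext i
    simp [AffineMap.lineMap_apply, PiLp.smul_apply, PiLp.add_apply, PiLp.sub_apply,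
      smul_eq_mul]
    ring
  rw [this]
  exact AffineMap.lineMap_mem_affineSpan_pair τ p r

/-- middle point lemma -/
lemma mid (hu : u0^2 + u1^2 = 1) {s : ℝ} (hs : 0 ≤ s) (p q r : Pt) (hpr : p ≠ r) (h : ℝ)
    (hp : |YY u0 u1 p - h| ≤ s) (hq : |YY u0 u1 q - h| ≤ s) (hr : |YY u0 u1 r - h| ≤ s)
    (h1 : XX u0 u1 p ≤ XX u0 u1 q) (h2 : XX u0 u1 q ≤ XX u0 u1 r) :
    Metric.infDist q (lineThrough p r) ≤ 2 * s := by
  have key : ∀ τ : ℝ,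
      dist q (WithLp.toLp 2 (fun i => p i + τ * (r i - p i)) : Pt)
      = Real.sqrt ((XX u0 u1 q - XX u0 u1 p - τ * (XX u0 u1 r - XX u0 u1 p))^2
        + (YY u0 u1 q - YY u0 u1 p - τ * (YY u0 u1 r - YY u0 u1 p))^2) := by
    intro τ
    rw [dist_sq hu]
    simp only [XX, YY, PiLp.toLp_apply]
    congr 2 <;> ring
  by_cases hxx : XX u0 u1 p = XX u0 u1 r
  · have hx1 : XX u0 u1 q = XX u0 u1 p := le_antisymm (hxx ▸ h2) h1
    have hYpr : YY u0 u1 p ≠ YY u0 u1 r := by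
      intro hy
      exact hpr (pt_eq_of_sq p r (by have := frame_sq hu p r; nlinarith))
    set τ : ℝ := (YY u0 u1 q - YY u0 u1 p) / (YY u0 u1 r - YY u0 u1 p) with hτ
    refine le_trans (Metric.infDist_le_dist_of_mem (mem_lineThrough τ p r)) ?_
    rw [key τ]
    have hne : YY u0 u1 r - YY u0 u1 p ≠ 0 := sub_ne_zero.2 (Ne.symm hYpr)
    have e2 : YY u0 u1 q - YY u0 u1 p - τ * (YY u0 u1 r - YY u0 u1 p) = 0 := by
      rw [hτ]; field_simp; ring
    have e1 : XX u0 u1 q - XX u0 u1 p - τ * (XX u0 u1 r - XX u0 u1 p) = 0 := by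
      rw [hx1, ← hxx]; ring
    rw [e1, e2]
    simpa using (by positivity : (0:ℝ) ≤ 2*s)
  · have hlt : XX u0 u1 p < XX u0 u1 r := lt_of_le_of_ne (h1.trans h2) hxx
    set τ : ℝ := (XX u0 u1 q - XX u0 u1 p) / (XX u0 u1 r - XX u0 u1 p) with hτ
    refine le_trans (Metric.infDist_le_dist_of_mem (mem_lineThrough τ p r)) ?_
    rw [key τ]
    have hne : XX u0 u1 r - XX u0 u1 p ≠ 0 := sub_ne_zero.2 hlt.ne'
    have e1 : XX u0 u1 q - XX u0 u1 p - τ * (XX u0 u1 r - XX u0 u1 p) = 0 := by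
      rw [hτ]; field_simp; ring
    rw [e1]
    have hτ0 : 0 ≤ τ := by
      apply div_nonneg <;> linarith
    have hτ1 : τ ≤ 1 := by
      rw [div_le_one (by linarith)]
      linarith
    have habs : |YY u0 u1 q - YY u0 u1 p - τ * (YY u0 u1 r - YY u0 u1 p)| ≤ 2 * s := by
      have h1' := abs_le.1 hp
      have h2' := abs_le.1 hq
      have h3' := abs_le.1 hr
      rw [abs_le]
      constructor <;> nlinarith [mul_le_mul_of_nonneg_left (h3'.1) hτ0,
        mul_le_mul_of_nonneg_left (h3'.2) hτ0, mul_le_mul_of_nonneg_left (h1'.1) hτ0,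
        mul_le_mul_of_nonneg_left (h1'.2) hτ0]
    calc Real.sqrt (0^2 + (YY u0 u1 q - YY u0 u1 p - τ * (YY u0 u1 r - YY u0 u1 p))^2)
        = |YY u0 u1 q - YY u0 u1 p - τ * (YY u0 u1 r - YY u0 u1 p)| := by
          rw [← Real.sqrt_sq_eq_abs]; ring_nf
      _ ≤ 2 * s := habs

lemma lineThrough_comm (a b : Pt) : lineThrough a b = lineThrough b a := by
  unfold lineThrough
  rw [Set.pair_comm]

/-- if a perturbed collinear configuration exists within distance `s`, the original
(pairwise distinct) triple is `2s`-flat. -/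
lemma core {s : ℝ} (hs : 0 ≤ s) (a b c a₁ b₁ c₁ : Pt) (hab : a ≠ b) (hac : a ≠ c) (hbc : b ≠ c)
    (da : dist a₁ a ≤ s) (db : dist b₁ b ≤ s) (dc : dist c₁ c ≤ s)
    (hdet : det3 a₁ b₁ c₁ = 0) :
    distLine a b c ≤ 2 * s ∨ distLine b a c ≤ 2 * s ∨ distLine c a b ≤ 2 * s := by
  -- find a unit direction such that a₁ b₁ c₁ share the YY coordinate
  have main : ∀ u0 u1 : ℝ, u0^2 + u1^2 = 1 →
      YY u0 u1 b₁ = YY u0 u1 a₁ → YY u0 u1 c₁ = YY u0 u1 a₁ →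
      distLine a b c ≤ 2 * s ∨ distLine b a c ≤ 2 * s ∨ distLine c a b ≤ 2 * s := by
    intro u0 u1 hu hb1 hc1
    have hpa : |YY u0 u1 a - YY u0 u1 a₁| ≤ s :=
      le_trans (abs_YY_le_dist hu a a₁) (by rwa [dist_comm])
    have hpb : |YY u0 u1 b - YY u0 u1 a₁| ≤ s := by
      rw [← hb1]
      exact le_trans (abs_YY_le_dist hu b b₁) (by rwa [dist_comm])
    have hpc : |YY u0 u1 c - YY u0 u1 a₁| ≤ s := by
      rw [← hc1]
      exact le_trans (abs_YY_le_dist hu c c₁) (by rwa [dist_comm])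
    set h := YY u0 u1 a₁
    unfold distLine
    rcases le_total (XX u0 u1 a) (XX u0 u1 b) with h1 | h1 <;>
      rcases le_total (XX u0 u1 b) (XX u0 u1 c) with h2 | h2 <;>
      rcases le_total (XX u0 u1 a) (XX u0 u1 c) with h3 | h3
    · exact Or.inr (Or.inl (mid hu hs a b c hac h hpa hpb hpc h1 h2))
    · exact Or.inr (Or.inl (mid hu hs a b c hac h hpa hpb hpc h1 h2))
    · exact Or.inr (Or.inr (mid hu hs a c b hab h hpa hpc hpb h3 h2))
    · rw [lineThrough_comm b c]
      exact Or.inl (mid hu hs c a b hbc.symm h hpc hpa hpb h3 h1)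
    · exact Or.inl (mid hu hs b a c hbc h hpb hpa hpc h1 h3)
    · rw [lineThrough_comm a b]
      exact Or.inr (Or.inr (mid hu hs b c a hab.symm h hpb hpc hpa h2 h3))
    · rw [lineThrough_comm a c]
      exact Or.inr (Or.inl (mid hu hs c b a hac.symm h hpc hpb hpa h2 h1))
    · rw [lineThrough_comm a c]
      exact Or.inr (Or.inl (mid hu hs c b a hac.symm h hpc hpb hpa h2 h1))
  by_cases hba : b₁ = a₁
  · by_cases hca : c₁ = a₁
    · -- all three perturbed points coincide
      left
      unfold distLine
      refine le_trans (Metric.infDist_le_dist_of_mem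
        (left_mem_affineSpan_pair ℝ b c)) ?_
      calc dist a b ≤ dist a a₁ + dist a₁ b := dist_triangle a a₁ b
        _ = dist a₁ a + dist b₁ b := by rw [dist_comm a a₁, hba, dist_comm]
        _ ≤ 2 * s := by linarith
    · -- direction from c₁ - a₁
      set L := dist c₁ a₁ with hL
      have hL0 : 0 < L := dist_pos.2 hca
      have hL2 : L^2 = (c₁ 0 - a₁ 0)^2 + (c₁ 1 - a₁ 1)^2 := by
        rw [hL, dist_pt, Real.sq_sqrt (by positivity)]
      refine main ((c₁ 0 - a₁ 0)/L) ((c₁ 1 - a₁ 1)/L) ?_ ?_ ?_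
      · field_simp
        linarith [hL2]
      · rw [hba]
      · unfold YY
        field_simp
        ring
  · -- direction from b₁ - a₁
    set L := dist b₁ a₁ with hL
    have hL0 : 0 < L := dist_pos.2 hba
    have hL2 : L^2 = (b₁ 0 - a₁ 0)^2 + (b₁ 1 - a₁ 1)^2 := by
      rw [hL, dist_pt, Real.sq_sqrt (by positivity)]
    refine main ((b₁ 0 - a₁ 0)/L) ((b₁ 1 - a₁ 1)/L) ?_ ?_ ?_
    · field_simp
      linarith [hL2]
    · unfold YY
      field_simp
      ring
    · unfold YY
      unfold det3 at hdet
      field_simp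
      linear_combination hdet

lemma snap_dist {w : ℝ} (hw : 0 < w) (x : Pt) :
    dist (snap w x) x ≤ Real.sqrt 2 * w / 2 := by
  rw [dist_pt]
  have key : ∀ i : Fin 2, |snap w x i - x i| ≤ w / 2 := by
    intro i
    have : snap w x i - x i = -(w * (x i / w - (round (x i / w) : ℝ))) := by
      unfold snap
      field_simp
      ring
    rw [this, abs_neg, abs_mul, abs_of_pos hw]
    have := abs_sub_round (x i / w)
    calc w * |x i / w - (round (x i / w) : ℝ)| ≤ w * (1/2) := by
          apply mul_le_mul_of_nonneg_left _ hw.le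
          exact this
      _ = w / 2 := by ring
  have h0 := abs_le.1 (key 0)
  have h1 := abs_le.1 (key 1)
  have : (snap w x 0 - x 0)^2 + (snap w x 1 - x 1)^2 ≤ (Real.sqrt 2 * w / 2)^2 := by
    have h2 : (Real.sqrt 2 * w / 2)^2 = 2 * w^2 / 4 := by
      rw [div_pow, mul_pow, Real.sq_sqrt (by norm_num : (0:ℝ) ≤ 2)]
      norm_num
    rw [h2]
    nlinarith
  calc Real.sqrt ((snap w x 0 - x 0)^2 + (snap w x 1 - x 1)^2)
      ≤ Real.sqrt ((Real.sqrt 2 * w / 2)^2) := Real.sqrt_le_sqrt this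
    _ = Real.sqrt 2 * w / 2 := Real.sqrt_sq (by positivity)

def seg (x y : Pt) (t : ℝ) : Pt := WithLp.toLp 2 (fun i => x i + t * (y i - x i))

lemma seg_dist {w : ℝ} (hw : 0 < w) (x : Pt) {t : ℝ} (ht : t ∈ Set.Icc (0:ℝ) 1) :
    dist (seg x (snap w x) t) x ≤ Real.sqrt 2 * w / 2 := by
  have hsn := snap_dist hw x
  rw [dist_pt] at hsn ⊢
  have e : ∀ i : Fin 2, seg x (snap w x) t i - x i = t * (snap w x i - x i) := by
    intro i; unfold seg; ring
  rw [e 0, e 1]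
  have ht2 : t^2 ≤ 1 := by nlinarith [ht.1, ht.2]
  calc Real.sqrt ((t * (snap w x 0 - x 0))^2 + (t * (snap w x 1 - x 1))^2)
      ≤ Real.sqrt ((snap w x 0 - x 0)^2 + (snap w x 1 - x 1)^2) := by
        apply Real.sqrt_le_sqrt
        nlinarith [sq_nonneg (snap w x 0 - x 0), sq_nonneg (snap w x 1 - x 1)]
    _ ≤ Real.sqrt 2 * w / 2 := hsn

lemma seg_zero (x y : Pt) : seg x y 0 = x := by ext i; simp [seg]
lemma seg_one (x y : Pt) : seg x y 1 = y := by ext i; simp [seg]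

lemma det3_aab (a c : Pt) : det3 a a c = 0 := by unfold det3; ring
lemma det3_aba (a b : Pt) : det3 a b a = 0 := by unfold det3; ring
lemma det3_abb (a b : Pt) : det3 a b b = 0 := by unfold det3; ring

/-- the main deterministic lemma: snapping preserves orientation of non-flat triples. -/
lemma ori_snap {w : ℝ} (hw : 0 < w) (a b c : Pt) (hnf : ¬ WFlat w a b c) :
    ori (snap w a) (snap w b) (snap w c) = ori a b c := by
  by_cases hab : a = b
  · subst hab
    unfold ori
    rw [det3_aab, det3_aab]
  by_cases hac : a = c
  · subst hac
    unfold ori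
    rw [det3_aba, det3_aba]
  by_cases hbc : b = c
  · subst hbc
    unfold ori
    rw [det3_abb, det3_abb]
  set s := Real.sqrt 2 * w / 2 with hsdef
  have hs : 0 ≤ s := by positivity
  have h2s : 2 * s = Real.sqrt 2 * w := by rw [hsdef]; ring
  set A : ℝ → Pt := fun t => seg a (snap w a) t with hA
  set B : ℝ → Pt := fun t => seg b (snap w b) t with hB
  set C : ℝ → Pt := fun t => seg c (snap w c) t with hC
  have key : ∀ t ∈ Set.Icc (0:ℝ) 1, det3 (A t) (B t) (C t) ≠ 0 := by
    intro t ht hdet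
    apply hnf
    unfold WFlat
    rw [← h2s]
    exact core hs a b c (A t) (B t) (C t) hab hac hbc
      (seg_dist hw a ht) (seg_dist hw b ht) (seg_dist hw c ht) hdet
  have cont : Continuous (fun t => det3 (A t) (B t) (C t)) := by
    simp only [hA, hB, hC, det3, seg]
    fun_prop
  have hA0 : A 0 = a := seg_zero a _
  have hB0 : B 0 = b := seg_zero b _
  have hC0 : C 0 = c := seg_zero c _
  have hA1 : A 1 = snap w a := seg_one a _
  have hB1 : B 1 = snap w b := seg_one b _
  have hC1 : C 1 = snap w c := seg_one c _
  have h0 : det3 a b c ≠ 0 := by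
    have := key 0 (by norm_num)
    rwa [hA0, hB0, hC0] at this
  have h1 : det3 (snap w a) (snap w b) (snap w c) ≠ 0 := by
    have := key 1 (by norm_num)
    rwa [hA1, hB1, hC1] at this
  have same : (0 < det3 a b c) ↔ (0 < det3 (snap w a) (snap w b) (snap w c)) := by
    constructor
    · intro hpos
      rcases lt_trichotomy 0 (det3 (snap w a) (snap w b) (snap w c)) with h | h | h
      · exact h
      · exact absurd h.symm h1
      · exfalso
        have : (0:ℝ) ∈ Set.Icc (det3 (snap w a) (snap w b) (snap w c)) (det3 a b c) := by
          constructor <;> linarith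
        have := intermediate_value_Icc' (by norm_num : (0:ℝ) ≤ 1) cont.continuousOn
        rw [hA0, hB0, hC0, hA1, hB1, hC1] at this
        obtain ⟨t, ht, hval⟩ := this ‹(0:ℝ) ∈ Set.Icc _ _›
        exact key t ht hval
    · intro hpos
      rcases lt_trichotomy 0 (det3 a b c) with h | h | h
      · exact h
      · exact absurd h.symm h0
      · exfalso
        have : (0:ℝ) ∈ Set.Icc (det3 a b c) (det3 (snap w a) (snap w b) (snap w c)) := by
          constructor <;> linarith
        have := intermediate_value_Icc (by norm_num : (0:ℝ) ≤ 1) cont.continuousOn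
        rw [hA0, hB0, hC0, hA1, hB1, hC1] at this
        obtain ⟨t, ht, hval⟩ := this ‹(0:ℝ) ∈ Set.Icc _ _›
        exact key t ht hval
  unfold ori
  rcases lt_trichotomy 0 (det3 a b c) with h | h | h
  · rw [Real.sign_of_pos h, Real.sign_of_pos (same.1 h)]
  · exact absurd h.symm h0
  · have h' : det3 (snap w a) (snap w b) (snap w c) < 0 := by
      rcases lt_trichotomy 0 (det3 (snap w a) (snap w b) (snap w c)) with h2 | h2 | h2
      · exact absurd (same.2 h2) (by linarith)
      · exact absurd h2.symm h1
      · exact h2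
    rw [Real.sign_of_neg h', Real.sign_of_neg h]

/-- rotation by the frame (u0,u1) as a linear map -/
def rotMap (u0 u1 : ℝ) : Pt →ₗ[ℝ] Pt where
  toFun x := (WithLp.toLp 2 (fun i => if i = 0 then x 0 * u0 + x 1 * u1 else -(x 0) * u1 + x 1 * u0) : Pt)
  map_add' x y := by
    ext i
    simp only [PiLp.add_apply, PiLp.toLp_apply]
    split <;> ring
  map_smul' r x := by
    ext i
    simp only [PiLp.smul_apply, smul_eq_mul, RingHom.id_apply, PiLp.toLp_apply]
    split <;> ring

lemma rotMap_apply0 (u0 u1 : ℝ) (x : Pt) : rotMap u0 u1 x 0 = XX u0 u1 x := rfl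
lemma rotMap_apply1 (u0 u1 : ℝ) (x : Pt) : rotMap u0 u1 x 1 = YY u0 u1 x := rfl

lemma rotMap_comp (u0 u1 : ℝ) (hu : u0^2 + u1^2 = 1) (x : Pt) :
    rotMap u0 u1 (rotMap u0 (-u1) x) = x := by
  ext i
  fin_cases i
  · show XX u0 u1 (rotMap u0 (-u1) x) = x 0
    unfold XX
    rw [rotMap_apply0, rotMap_apply1]
    unfold XX YY
    linear_combination (x 0) * hu
  · show YY u0 u1 (rotMap u0 (-u1) x) = x 1
    unfold YY
    rw [rotMap_apply0, rotMap_apply1]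
    unfold XX YY
    linear_combination (x 1) * hu

lemma rotMap_comp' (u0 u1 : ℝ) (hu : u0^2 + u1^2 = 1) (x : Pt) :
    rotMap u0 (-u1) (rotMap u0 u1 x) = x := by
  ext i
  fin_cases i
  · show XX u0 (-u1) (rotMap u0 u1 x) = x 0
    unfold XX
    rw [rotMap_apply0, rotMap_apply1]
    unfold XX YY
    linear_combination (x 0) * hu
  · show YY u0 (-u1) (rotMap u0 u1 x) = x 1
    unfold YY
    rw [rotMap_apply0, rotMap_apply1]
    unfold XX YY
    linear_combination (x 1) * hu

lemma norm_pt (x : Pt) : ‖x‖ = Real.sqrt ((x 0)^2 + (x 1)^2) := by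
  simp [EuclideanSpace.norm_eq, Fin.sum_univ_two, Real.norm_eq_abs, sq_abs]

def rotIso (u0 u1 : ℝ) (hu : u0^2 + u1^2 = 1) : Pt ≃ₗᵢ[ℝ] Pt where
  toLinearEquiv := LinearEquiv.ofLinear (rotMap u0 u1) (rotMap u0 (-u1))
    (LinearMap.ext fun x => rotMap_comp u0 u1 hu x)
    (LinearMap.ext fun x => rotMap_comp' u0 u1 hu x)
  norm_map' := by
    intro x
    show ‖rotMap u0 u1 x‖ = ‖x‖
    rw [norm_pt, norm_pt, rotMap_apply0, rotMap_apply1]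
    congr 1
    unfold XX YY
    linear_combination ((x 0)^2 + (x 1)^2) * hu

lemma rotIso_apply0 (u0 u1 : ℝ) (hu : u0^2 + u1^2 = 1) (x : Pt) :
    rotIso u0 u1 hu x 0 = XX u0 u1 x := rfl
lemma rotIso_apply1 (u0 u1 : ℝ) (hu : u0^2 + u1^2 = 1) (x : Pt) :
    rotIso u0 u1 hu x 1 = YY u0 u1 x := rfl

/-- volume of a coordinate rectangle in the rotated frame -/
lemma volume_rect (u0 u1 : ℝ) (hu : u0^2 + u1^2 = 1) (k h δ t : ℝ) :
    volume {x : Pt | |XX u0 u1 x - k| ≤ δ ∧ |YY u0 u1 x - h| ≤ t}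
      ≤ ENNReal.ofReal (2*δ) * ENNReal.ofReal (2*t) := by
  have hR : {x : Pt | |XX u0 u1 x - k| ≤ δ ∧ |YY u0 u1 x - h| ≤ t}
      = (rotIso u0 u1 hu) ⁻¹' {y : Pt | y 0 ∈ Set.Icc (k - δ) (k + δ) ∧
          y 1 ∈ Set.Icc (h - t) (h + t)} := by
    ext x
    simp only [Set.mem_setOf_eq, Set.mem_preimage, rotIso_apply0, rotIso_apply1,
      Set.mem_Icc, abs_le]
    constructor <;> intro hx <;> exact ⟨by constructor <;> linarith [hx.1.1, hx.1.2],
      by constructor <;> linarith [hx.2.1, hx.2.2]⟩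
  rw [hR]
  have hmeas : MeasurableSet {y : Pt | y 0 ∈ Set.Icc (k - δ) (k + δ) ∧
      y 1 ∈ Set.Icc (h - t) (h + t)} := by
    apply MeasurableSet.inter
    · exact ((measurable_pi_apply 0).comp (WithLp.measurable_ofLp 2 _)) measurableSet_Icc
    · exact ((measurable_pi_apply 1).comp (WithLp.measurable_ofLp 2 _)) measurableSet_Icc
  rw [(rotIso u0 u1 hu).measurePreserving.measure_preimage hmeas.nullMeasurableSet]
  -- now compute the volume of the box in EuclideanSpace
  have hbox : {y : Pt | y 0 ∈ Set.Icc (k - δ) (k + δ) ∧ y 1 ∈ Set.Icc (h - t) (h + t)}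
      = (MeasurableEquiv.toLp 2 (Fin 2 → ℝ)).symm ⁻¹'
        (Set.univ.pi fun i : Fin 2 =>
          if i = 0 then Set.Icc (k - δ) (k + δ) else Set.Icc (h - t) (h + t)) := by
    ext y
    simp only [Set.mem_setOf_eq, Set.mem_preimage, Set.mem_pi, Set.mem_univ, forall_true_left,
      Fin.forall_fin_two, MeasurableEquiv.coe_toLp_symm]
    norm_num
  rw [hbox]
  have hpi : MeasurableSet (Set.univ.pi fun i : Fin 2 =>
      if i = 0 then Set.Icc (k - δ) (k + δ) else Set.Icc (h - t) (h + t)) :=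
    MeasurableSet.univ_pi fun i => by split <;> exact measurableSet_Icc
  rw [(EuclideanSpace.volume_preserving_symm_measurableEquiv_toLp (Fin 2)).measure_preimage
    hpi.nullMeasurableSet]
  rw [volume_pi_pi]
  rw [Fin.prod_univ_two]
  norm_num [Real.volume_Icc]
  apply mul_le_mul' <;> rw [← two_mul, ENNReal.ofReal_mul (by norm_num)] <;> simp

open Classical in
/-- measurable substitute for the distance to a line -/
def Dfun (x a b : Pt) : ℝ := if a = b then dist x a else |det3 a b x| / dist a b

lemma lineThrough_self (a : Pt) : lineThrough a a = {a} := by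
  unfold lineThrough
  rw [Set.pair_eq_singleton]
  exact AffineSubspace.coe_affineSpan_singleton ℝ Pt a

/-- in the frame aligned with the line through `a ≠ b`, points of the line have
constant `YY` coordinate, and `Dfun` computes the `YY`-deviation. -/
lemma line_frame {a b : Pt} (hab : a ≠ b) :
    ∀ x : Pt, |YY ((b 0 - a 0)/dist a b) ((b 1 - a 1)/dist a b) x
        - YY ((b 0 - a 0)/dist a b) ((b 1 - a 1)/dist a b) a| = Dfun x a b := by
  intro x
  set L := dist a b with hL
  have hL0 : 0 < L := dist_pos.2 hab
  have hL2 : L^2 = (b 0 - a 0)^2 + (b 1 - a 1)^2 := by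
    rw [hL, dist_pt, Real.sq_sqrt (by positivity)]
    ring
  unfold Dfun
  rw [if_neg hab]
  have : YY ((b 0 - a 0)/L) ((b 1 - a 1)/L) x - YY ((b 0 - a 0)/L) ((b 1 - a 1)/L) a
      = det3 a b x / L := by
    unfold YY det3
    field_simp
    ring
  rw [this, abs_div, abs_of_pos hL0]

lemma line_frame_unit {a b : Pt} (hab : a ≠ b) :
    ((b 0 - a 0)/dist a b)^2 + ((b 1 - a 1)/dist a b)^2 = 1 := by
  have hL0 : 0 < dist a b := dist_pos.2 hab
  have hL2 : (dist a b)^2 = (b 0 - a 0)^2 + (b 1 - a 1)^2 := by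
    rw [dist_pt, Real.sq_sqrt (by positivity)]
    ring
  field_simp
  linarith

lemma line_frame_const {a b : Pt} (hab : a ≠ b) {y : Pt} (hy : y ∈ lineThrough a b) :
    YY ((b 0 - a 0)/dist a b) ((b 1 - a 1)/dist a b) y
      = YY ((b 0 - a 0)/dist a b) ((b 1 - a 1)/dist a b) a := by
  have hL0 : 0 < dist a b := dist_pos.2 hab
  have hy' : (y - a) +ᵥ a ∈ line[ℝ, a, b] := by
    rw [vadd_eq_add, sub_add_cancel]
    exact hy
  obtain ⟨r, hr⟩ := vadd_left_mem_affineSpan_pair.1 hy'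
  have h0 : y 0 - a 0 = r * (b 0 - a 0) := by
    have := congrArg (fun v : Pt => v 0) hr
    simpa [PiLp.smul_apply, PiLp.sub_apply, smul_eq_mul, vsub_eq_sub] using this.symm
  have h1 : y 1 - a 1 = r * (b 1 - a 1) := by
    have := congrArg (fun v : Pt => v 1) hr
    simpa [PiLp.smul_apply, PiLp.sub_apply, smul_eq_mul, vsub_eq_sub] using this.symm
  unfold YY
  have e0 : y 0 = a 0 + r * (b 0 - a 0) := by linarith
  have e1 : y 1 = a 1 + r * (b 1 - a 1) := by linarith
  rw [e0, e1]
  field_simp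
  ring

lemma Dfun_le_distLine (x a b : Pt) : Dfun x a b ≤ distLine x a b := by
  by_cases hab : a = b
  · unfold Dfun distLine
    rw [if_pos hab, hab, lineThrough_self, Metric.infDist_singleton]
  · unfold distLine
    have hne : (lineThrough a b).Nonempty := ⟨a, left_mem_affineSpan_pair ℝ a b⟩
    rw [← line_frame hab x]
    apply le_of_not_gt
    intro hlt
    obtain ⟨y, hy, hd⟩ := (Metric.infDist_lt_iff hne).1 hlt
    apply absurd hd
    apply not_lt.2
    calc |YY ((b 0 - a 0)/dist a b) ((b 1 - a 1)/dist a b) x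
          - YY ((b 0 - a 0)/dist a b) ((b 1 - a 1)/dist a b) a|
        = |YY ((b 0 - a 0)/dist a b) ((b 1 - a 1)/dist a b) x
          - YY ((b 0 - a 0)/dist a b) ((b 1 - a 1)/dist a b) y| := by
          rw [line_frame_const hab hy]
      _ ≤ dist x y := abs_YY_le_dist (line_frame_unit hab) x y

lemma vol_strip (a b cc : Pt) {δ t : ℝ} (hδ : 0 ≤ δ) (ht : 0 ≤ t) :
    volume ({x : Pt | Dfun x a b ≤ t} ∩ Metric.closedBall cc δ)
      ≤ ENNReal.ofReal (2*δ) * ENNReal.ofReal (2*t) := by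
  obtain ⟨u0, u1, hu, key⟩ : ∃ u0 u1 : ℝ, u0^2 + u1^2 = 1 ∧
      ∀ x : Pt, Dfun x a b ≤ t → |YY u0 u1 x - YY u0 u1 a| ≤ t := by
    by_cases hab : a = b
    · refine ⟨1, 0, by norm_num, fun x hx => ?_⟩
      unfold Dfun at hx
      rw [if_pos hab] at hx
      exact le_trans (abs_YY_le_dist (by norm_num) x a) hx
    · exact ⟨_, _, line_frame_unit hab, fun x hx => (line_frame hab x) ▸ hx⟩
  refine le_trans (measure_mono ?_) (volume_rect u0 u1 hu (XX u0 u1 cc) (YY u0 u1 a) δ t)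
  rintro x ⟨hx1, hx2⟩
  exact ⟨le_trans (abs_XX_le_dist hu x cc) (Metric.mem_closedBall.1 hx2), key x hx1⟩

lemma volume_disk (cc : Pt) (δ : ℝ) :
    volume (Metric.closedBall cc δ) = ENNReal.ofReal δ ^ 2 * ENNReal.ofReal π := by
  rw [EuclideanSpace.volume_closedBall]
  norm_num [Fintype.card_fin]
  rw [← ENNReal.ofReal_pow (Real.sqrt_nonneg _), Real.sq_sqrt Real.pi_nonneg]

lemma unifDisk_strip (a b cc : Pt) {δ t : ℝ} (hδ : 0 < δ) (ht : 0 ≤ t) :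
    unifDisk cc δ {x | Dfun x a b ≤ t}
      ≤ ENNReal.ofReal ((2*δ)*(2*t)/(π*δ^2)) := by
  unfold unifDisk
  rw [Measure.smul_apply, Measure.restrict_apply' measurableSet_closedBall, smul_eq_mul]
  have hball : volume (Metric.closedBall cc δ) = ENNReal.ofReal (π*δ^2) := by
    rw [volume_disk, ← ENNReal.ofReal_pow hδ.le, ← ENNReal.ofReal_mul (by positivity)]
    ring_nf
  rw [hball]
  calc (ENNReal.ofReal (π*δ^2))⁻¹ * volume ({x | Dfun x a b ≤ t} ∩ Metric.closedBall cc δ)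
      ≤ (ENNReal.ofReal (π*δ^2))⁻¹ * (ENNReal.ofReal (2*δ) * ENNReal.ofReal (2*t)) :=
        mul_le_mul_right (vol_strip a b cc hδ.le ht) _
    _ = ENNReal.ofReal ((2*δ)*(2*t)/(π*δ^2)) := by
        rw [← ENNReal.ofReal_mul (by positivity),
          ENNReal.ofReal_div_of_pos (by positivity), ENNReal.div_eq_inv_mul]

lemma continuous_det3 : Continuous (fun z : Pt × Pt × Pt => det3 z.1 z.2.1 z.2.2) := by
  unfold det3
  have h0 : ∀ i : Fin 2, Continuous (fun x : Pt => x i) := fun i =>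
    (EuclideanSpace.proj i : EuclideanSpace ℝ (Fin 2) →L[ℝ] ℝ).continuous
  fun_prop

lemma measurable_Dfun : Measurable (fun z : Pt × Pt × Pt => Dfun z.1 z.2.1 z.2.2) := by
  unfold Dfun
  apply Measurable.ite
  · exact IsClosed.measurableSet (isClosed_eq (by fun_prop) (by fun_prop))
  · fun_prop
  · apply Measurable.div
    · have hc : Continuous (fun z : Pt × Pt × Pt => det3 z.2.1 z.2.2 z.1) := by
        unfold det3
        have h0 : ∀ i : Fin 2, Continuous (fun x : Pt => x i) := fun i =>
          (EuclideanSpace.proj i : EuclideanSpace ℝ (Fin 2) →L[ℝ] ℝ).continuous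
        fun_prop
      exact hc.abs.measurable
    · exact (by fun_prop : Continuous fun z : Pt × Pt × Pt => dist z.2.1 z.2.2).measurable

lemma unifDisk_prob (cc : Pt) {δ : ℝ} (hδ : 0 < δ) : IsProbabilityMeasure (unifDisk cc δ) := by
  constructor
  unfold unifDisk
  rw [Measure.smul_apply, Measure.restrict_apply' measurableSet_closedBall, Set.univ_inter,
    smul_eq_mul]
  exact ENNReal.inv_mul_cancel (Metric.measure_closedBall_pos volume cc hδ).ne'
    measure_closedBall_lt_top.ne

lemma pi_strip {n : ℕ} {δ t : ℝ} (hδ : 0 < δ) (ht : 0 ≤ t) (c : Fin n → Pt)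
    (m i j : Fin n) (him : i ≠ m) (hjm : j ≠ m) :
    Measure.pi (fun l => unifDisk (c l) δ) {f : Fin n → Pt | Dfun (f m) (f i) (f j) ≤ t}
      ≤ ENNReal.ofReal ((2*δ)*(2*t)/(π*δ^2)) := by
  haveI : ∀ l, IsProbabilityMeasure (unifDisk (c l) δ) := fun l => unifDisk_prob (c l) hδ
  classical
  set P : Fin n → Prop := fun l => l ≠ m with hP
  have MP := MeasureTheory.measurePreserving_piEquivPiSubtypeProd
    (fun l : Fin n => unifDisk (c l) δ) P
  set A : Set ((∀ l : {l // P l}, Pt) × (∀ l : {l // ¬ P l}, Pt)) :=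
    {y | Dfun (y.2 ⟨m, by simp [hP]⟩) (y.1 ⟨i, him⟩) (y.1 ⟨j, hjm⟩) ≤ t} with hA
  have hmeasA : MeasurableSet A := by
    have hm1 : Measurable fun y : (∀ l : {l // P l}, Pt) × (∀ l : {l // ¬ P l}, Pt) =>
        ((y.2 ⟨m, by simp [hP]⟩, y.1 ⟨i, him⟩, y.1 ⟨j, hjm⟩) : Pt × Pt × Pt) := by
      apply Measurable.prod
      · exact (measurable_pi_apply _).comp measurable_snd
      · exact Measurable.prod ((measurable_pi_apply _).comp measurable_fst)
          ((measurable_pi_apply _).comp measurable_fst)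
    exact measurableSet_le (measurable_Dfun.comp hm1) measurable_const
  have hpre : {f : Fin n → Pt | Dfun (f m) (f i) (f j) ≤ t}
      = (MeasurableEquiv.piEquivPiSubtypeProd (fun _ : Fin n => Pt) P) ⁻¹' A := rfl
  rw [hpre, MP.measure_preimage hmeasA.nullMeasurableSet]
  rw [Measure.prod_apply hmeasA]
  haveI : Unique {l : Fin n // ¬ P l} :=
    ⟨⟨⟨m, by simp [hP]⟩⟩, fun l => Subtype.ext (not_not.1 l.2)⟩
  have hsec : ∀ g : ∀ l : {l // P l}, Pt,
      (Measure.pi fun l : {l : Fin n // ¬ P l} => unifDisk (c l.1) δ) (Prod.mk g ⁻¹' A)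
        ≤ ENNReal.ofReal ((2*δ)*(2*t)/(π*δ^2)) := by
    intro g
    have hset : Prod.mk g ⁻¹' A = Set.univ.pi (fun _ : {l : Fin n // ¬ P l} =>
        {x : Pt | Dfun x (g ⟨i, him⟩) (g ⟨j, hjm⟩) ≤ t}) := by
      ext h
      simp only [Set.mem_preimage, hA, Set.mem_setOf_eq, Set.mem_pi, Set.mem_univ,
        forall_true_left]
      constructor
      · intro hx l
        have hl : l = (⟨m, by simp [hP]⟩ : {l : Fin n // ¬ P l}) := Subsingleton.elim _ _
        rw [hl]
        exact hx
      · intro hx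
        exact hx _
    rw [hset, Measure.pi_pi, Fintype.prod_unique]
    exact unifDisk_strip _ _ _ hδ ht
  calc (∫⁻ g, (Measure.pi fun l : {l : Fin n // ¬ P l} => unifDisk (c l.1) δ)
        (Prod.mk g ⁻¹' A) ∂(Measure.pi fun l : {l : Fin n // P l} => unifDisk (c l.1) δ))
      ≤ ∫⁻ _, ENNReal.ofReal ((2*δ)*(2*t)/(π*δ^2))
          ∂(Measure.pi fun l : {l : Fin n // P l} => unifDisk (c l.1) δ) :=
        lintegral_mono hsec
    _ = ENNReal.ofReal ((2*δ)*(2*t)/(π*δ^2)) := by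
        rw [lintegral_const, measure_univ, mul_one]

lemma wflat_swap1 {w : ℝ} {p q r : Pt} (h : WFlat w p q r) : WFlat w q p r := by
  unfold WFlat distLine at *
  rw [lineThrough_comm q p]
  tauto

lemma wflat_swap2 {w : ℝ} {p q r : Pt} (h : WFlat w p q r) : WFlat w p r q := by
  unfold WFlat distLine at *
  rw [lineThrough_comm r q]
  tauto

lemma triple_inj {n : ℕ} {a b c a' b' c' : Fin n} (h1 : a < b) (h2 : b < c)
    (h1' : a' < b') (h2' : b' < c')
    (hset : ({a, b, c} : Finset (Fin n)) = {a', b', c'}) : a = a' ∧ b = b' ∧ c = c' := by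
  have ha' : a' = a ∨ a' = b ∨ a' = c := by
    have : a' ∈ ({a, b, c} : Finset (Fin n)) := by rw [hset]; simp
    simpa using this
  have hb' : b' = a ∨ b' = b ∨ b' = c := by
    have : b' ∈ ({a, b, c} : Finset (Fin n)) := by rw [hset]; simp
    simpa using this
  have hc' : c' = a ∨ c' = b ∨ c' = c := by
    have : c' ∈ ({a, b, c} : Finset (Fin n)) := by rw [hset]; simp
    simpa using this
  have ha : a = a' ∨ a = b' ∨ a = c' := by
    have : a ∈ ({a', b', c'} : Finset (Fin n)) := by rw [← hset]; simp
    simpa using this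
  have hb : b = a' ∨ b = b' ∨ b = c' := by
    have : b ∈ ({a', b', c'} : Finset (Fin n)) := by rw [← hset]; simp
    simpa using this
  have hc : c = a' ∨ c = b' ∨ c = c' := by
    have : c ∈ ({a', b', c'} : Finset (Fin n)) := by rw [← hset]; simp
    simpa using this
  have haa : a = a' := by
    have le1 : a ≤ a' := by
      rcases ha' with h | h | h
      · exact h.ge
      · exact h ▸ h1.le
      · exact h ▸ (h1.trans h2).le
    have le2 : a' ≤ a := by
      rcases ha with h | h | h
      · exact h.ge
      · exact h ▸ h1'.le
      · exact h ▸ (h1'.trans h2').le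
    exact le_antisymm le1 le2
  have hcc : c = c' := by
    have le1 : c' ≤ c := by
      rcases hc' with h | h | h
      · exact h.trans_le (h1.trans h2).le
      · exact h.trans_le h2.le
      · exact h.le
    have le2 : c ≤ c' := by
      rcases hc with h | h | h
      · exact h.trans_le (h1'.trans h2').le
      · exact h.trans_le h2'.le
      · exact h.le
    exact le_antisymm le2 le1
  refine ⟨haa, ?_, hcc⟩
  rcases hb with h | h | h
  · exfalso
    rw [h, ← haa] at h1
    exact lt_irrefl a h1
  · exact h
  · exfalso
    rw [hcc, ← h] at h2
    exact lt_irrefl b h2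

lemma card_T {n : ℕ} : (Finset.univ.filter (fun τ : Fin n × Fin n × Fin n =>
    τ.1 < τ.2.1 ∧ τ.2.1 < τ.2.2)).card ≤ n.choose 3 := by
  classical
  have hmaps : ∀ τ ∈ Finset.univ.filter (fun τ : Fin n × Fin n × Fin n =>
      τ.1 < τ.2.1 ∧ τ.2.1 < τ.2.2),
      ({τ.1, τ.2.1, τ.2.2} : Finset (Fin n)) ∈ Finset.univ.powersetCard 3 := by
    intro τ hτ
    rw [Finset.mem_filter] at hτ
    obtain ⟨-, h1, h2⟩ := hτ
    rw [Finset.mem_powersetCard_univ, Finset.card_eq_three]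
    exact ⟨τ.1, τ.2.1, τ.2.2, h1.ne, (h1.trans h2).ne, h2.ne, rfl⟩
  have hinj : Set.InjOn (fun τ : Fin n × Fin n × Fin n => ({τ.1, τ.2.1, τ.2.2} : Finset (Fin n)))
      (Finset.univ.filter (fun τ : Fin n × Fin n × Fin n => τ.1 < τ.2.1 ∧ τ.2.1 < τ.2.2)) := by
    intro τ hτ σ hσ hts
    simp only [Finset.coe_filter, Set.mem_setOf_eq, Finset.mem_univ, true_and] at hτ hσ
    obtain ⟨e1, e2, e3⟩ := triple_inj hτ.1 hτ.2 hσ.1 hσ.2 hts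
    exact Prod.ext e1 (Prod.ext e2 e3)
  have := Finset.card_le_card_of_injOn _ hmaps hinj
  rwa [Finset.card_powersetCard, Finset.card_univ, Fintype.card_fin] at this

lemma card_T6 {n : ℕ} : 6 * (Finset.univ.filter (fun τ : Fin n × Fin n × Fin n =>
    τ.1 < τ.2.1 ∧ τ.2.1 < τ.2.2)).card ≤ n^3 := by
  calc 6 * (Finset.univ.filter (fun τ : Fin n × Fin n × Fin n =>
        τ.1 < τ.2.1 ∧ τ.2.1 < τ.2.2)).card
      ≤ 6 * n.choose 3 := Nat.mul_le_mul_left 6 card_T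
    _ = Nat.factorial 3 * n.choose 3 := by norm_num [Nat.factorial]
    _ = n.descFactorial 3 := (Nat.descFactorial_eq_factorial_mul_choose n 3).symm
    _ ≤ n^3 := Nat.descFactorial_le_pow n 3

lemma measurable_sign : Measurable Real.sign := by
  unfold Real.sign
  exact Measurable.ite (measurableSet_lt measurable_id measurable_const) measurable_const
    (Measurable.ite (measurableSet_lt measurable_const measurable_id) measurable_const
      measurable_const)

lemma measurable_snap (w : ℝ) : Measurable (snap w) := by
  unfold snap
  refine (WithLp.measurable_toLp 2 _).comp ?_
  apply measurable_pi_lambda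
  intro i
  have hrd : Measurable (fun y : ℝ => ((round y : ℤ) : ℝ)) := by
    apply Monotone.measurable
    intro u v huv
    simp only [round_eq]
    exact_mod_cast Int.floor_mono (by linarith)
  exact ((hrd.comp (((measurable_pi_apply i).comp (WithLp.measurable_ofLp 2 (Fin 2 → ℝ))).div_const w)).const_mul w)

lemma measurable_oris {n : ℕ} (w : ℝ) (i j k : Fin n) :
    MeasurableSet {f : Fin n → Pt |
      ori (snap w (f i)) (snap w (f j)) (snap w (f k)) = ori (f i) (f j) (f k)} := by
  have mori : Measurable (fun z : Pt × Pt × Pt => ori z.1 z.2.1 z.2.2) := by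
    unfold ori
    exact measurable_sign.comp continuous_det3.measurable
  have hcoord : Measurable fun f : Fin n → Pt => ((f i, f j, f k) : Pt × Pt × Pt) :=
    (measurable_pi_apply i).prod ((measurable_pi_apply j).prod (measurable_pi_apply k))
  have hcoord' : Measurable fun f : Fin n → Pt =>
      ((snap w (f i), snap w (f j), snap w (f k)) : Pt × Pt × Pt) :=
    ((measurable_snap w).comp (measurable_pi_apply i)).prod
      (((measurable_snap w).comp (measurable_pi_apply j)).prod
        ((measurable_snap w).comp (measurable_pi_apply k)))
  exact measurableSet_eq_fun (mori.comp hcoord') (mori.comp hcoord)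

end Stmt8

set_option maxHeartbeats 2000000 in
open Stmt8 in
theorem stmt8 (n : ℕ) (hn : 1 ≤ n) (δ p : ℝ) (hδ : 0 < δ) (hp : 0 < p) (hp1 : p ≤ 1)
    (c : Fin n → Pt) :
    ENNReal.ofReal (1 - p) ≤
      Measure.pi (fun i => unifDisk (c i) δ)
        {f : Fin n → Pt | ∀ i j k : Fin n,
          ori (snap (p * δ / (n : ℝ) ^ 3) (f i)) (snap (p * δ / (n : ℝ) ^ 3) (f j))
              (snap (p * δ / (n : ℝ) ^ 3) (f k)) = ori (f i) (f j) (f k)} := by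
  classical
  have hn0 : (0:ℝ) < (n:ℝ) := by exact_mod_cast hn
  set w : ℝ := p * δ / (n : ℝ) ^ 3 with hw
  have hw0 : 0 < w := by positivity
  set t : ℝ := Real.sqrt 2 * w with htdef
  have ht0 : 0 ≤ t := by positivity
  haveI : ∀ l, IsProbabilityMeasure (unifDisk (c l) δ) := fun l => unifDisk_prob (c l) hδ
  set ν := Measure.pi (fun i : Fin n => unifDisk (c i) δ) with hν
  haveI : IsProbabilityMeasure ν := by rw [hν]; infer_instance
  set G := {f : Fin n → Pt | ∀ i j k : Fin n,
    ori (snap w (f i)) (snap w (f j)) (snap w (f k)) = ori (f i) (f j) (f k)} with hG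
  have hGmeas : MeasurableSet G := by
    have : G = ⋂ (i : Fin n), ⋂ (j : Fin n), ⋂ (k : Fin n),
        {f : Fin n → Pt | ori (snap w (f i)) (snap w (f j)) (snap w (f k))
          = ori (f i) (f j) (f k)} := by
      ext f
      simp [hG, Set.mem_iInter]
    rw [this]
    exact MeasurableSet.iInter fun i => MeasurableSet.iInter fun j =>
      MeasurableSet.iInter fun k => measurable_oris w i j k
  set T := Finset.univ.filter (fun τ : Fin n × Fin n × Fin n =>
    τ.1 < τ.2.1 ∧ τ.2.1 < τ.2.2) with hT
  set E : Fin n × Fin n × Fin n → Set (Fin n → Pt) := fun τ =>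
    {f | Dfun (f τ.1) (f τ.2.1) (f τ.2.2) ≤ t} ∪
    ({f | Dfun (f τ.2.1) (f τ.1) (f τ.2.2) ≤ t} ∪
     {f | Dfun (f τ.2.2) (f τ.1) (f τ.2.1) ≤ t}) with hE
  have toE : ∀ (f : Fin n → Pt) (a b d : Fin n), WFlat w (f a) (f b) (f d) →
      f ∈ E (a, b, d) := by
    intro f a b d hf'
    have conv : ∀ x y z : Pt, distLine x y z ≤ Real.sqrt 2 * w → Dfun x y z ≤ t := by
      intro x y z hx
      rw [htdef]
      exact le_trans (Dfun_le_distLine x y z) hx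
    rcases hf' with h | h | h
    · exact Or.inl (conv _ _ _ h)
    · exact Or.inr (Or.inl (conv _ _ _ h))
    · exact Or.inr (Or.inr (conv _ _ _ h))
  have hsub : Gᶜ ⊆ ⋃ τ ∈ T, E τ := by
    intro f hf
    rw [Set.mem_compl_iff, hG, Set.notMem_setOf_iff] at hf
    push_neg at hf
    obtain ⟨i, ⟨j, k, hne⟩⟩ := hf
    have hij : i ≠ j := by
      rintro rfl
      exact hne (by unfold ori; rw [det3_aab, det3_aab])
    have hik : i ≠ k := by
      rintro rfl
      exact hne (by unfold ori; rw [det3_aba, det3_aba])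
    have hjk : j ≠ k := by
      rintro rfl
      exact hne (by unfold ori; rw [det3_abb, det3_abb])
    have hWF : WFlat w (f i) (f j) (f k) := by
      by_contra hc
      exact hne (ori_snap hw0 _ _ _ hc)
    have hmemT : ∀ a b d : Fin n, a < b → b < d → (a, b, d) ∈ T := by
      intro a b d h1 h2
      rw [hT, Finset.mem_filter]
      exact ⟨Finset.mem_univ _, h1, h2⟩
    rcases lt_trichotomy i j with h1 | h1 | h1
    · rcases lt_trichotomy j k with h2 | h2 | h2
      · exact Set.mem_biUnion (hmemT i j k h1 h2) (toE f i j k hWF)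
      · exact absurd h2 hjk
      · rcases lt_trichotomy i k with h3 | h3 | h3
        · exact Set.mem_biUnion (hmemT i k j h3 h2) (toE f i k j (wflat_swap2 hWF))
        · exact absurd h3 hik
        · exact Set.mem_biUnion (hmemT k i j h3 h1)
            (toE f k i j (wflat_swap1 (wflat_swap2 hWF)))
    · exact absurd h1 hij
    · rcases lt_trichotomy i k with h3 | h3 | h3
      · exact Set.mem_biUnion (hmemT j i k h1 h3) (toE f j i k (wflat_swap1 hWF))
      · exact absurd h3 hik
      · rcases lt_trichotomy j k with h2 | h2 | h2
        · exact Set.mem_biUnion (hmemT j k i h2 h3)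
            (toE f j k i (wflat_swap2 (wflat_swap1 hWF)))
        · exact absurd h2 hjk
        · exact Set.mem_biUnion (hmemT k j i h2 h1)
            (toE f k j i (wflat_swap1 (wflat_swap2 (wflat_swap1 hWF))))
  set q : ENNReal := ENNReal.ofReal ((2*δ)*(2*t)/(π*δ^2)) with hq
  have hEbound : ∀ τ ∈ T, ν (E τ) ≤ 3 * q := by
    intro τ hτ
    rw [hT, Finset.mem_filter] at hτ
    obtain ⟨-, ht1, ht2⟩ := hτ
    have b1 : ν {f : Fin n → Pt | Dfun (f τ.1) (f τ.2.1) (f τ.2.2) ≤ t} ≤ q :=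
      pi_strip hδ ht0 c τ.1 τ.2.1 τ.2.2 ht1.ne' (ht1.trans ht2).ne'
    have b2 : ν {f : Fin n → Pt | Dfun (f τ.2.1) (f τ.1) (f τ.2.2) ≤ t} ≤ q :=
      pi_strip hδ ht0 c τ.2.1 τ.1 τ.2.2 ht1.ne ht2.ne'
    have b3 : ν {f : Fin n → Pt | Dfun (f τ.2.2) (f τ.1) (f τ.2.1) ≤ t} ≤ q :=
      pi_strip hδ ht0 c τ.2.2 τ.1 τ.2.1 (ht1.trans ht2).ne ht2.ne
    calc ν (E τ) ≤ ν {f : Fin n → Pt | Dfun (f τ.1) (f τ.2.1) (f τ.2.2) ≤ t}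
          + ν ({f : Fin n → Pt | Dfun (f τ.2.1) (f τ.1) (f τ.2.2) ≤ t}
            ∪ {f : Fin n → Pt | Dfun (f τ.2.2) (f τ.1) (f τ.2.1) ≤ t}) := measure_union_le _ _
      _ ≤ ν {f : Fin n → Pt | Dfun (f τ.1) (f τ.2.1) (f τ.2.2) ≤ t}
          + (ν {f : Fin n → Pt | Dfun (f τ.2.1) (f τ.1) (f τ.2.2) ≤ t}
            + ν {f : Fin n → Pt | Dfun (f τ.2.2) (f τ.1) (f τ.2.1) ≤ t}) :=
          add_le_add_right (measure_union_le _ _) _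
      _ ≤ q + (q + q) := by
          exact add_le_add b1 (add_le_add b2 b3)
      _ = 3 * q := by ring
  have hbad : ν Gᶜ ≤ ENNReal.ofReal p := by
    have step1 : ν Gᶜ ≤ ∑ τ ∈ T, ν (E τ) :=
      le_trans (measure_mono hsub) (measure_biUnion_finset_le T E)
    have step2 : ∑ τ ∈ T, ν (E τ) ≤ T.card • (3 * q) :=
      Finset.sum_le_card_nsmul T _ _ hEbound
    have step3 : (T.card : ENNReal) * (3 * q) ≤ ENNReal.ofReal p := by
      have hqr : (2*δ)*(2*t)/(π*δ^2) = 4*Real.sqrt 2*p/(π*(n:ℝ)^3) := by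
        rw [htdef, hw]
        have : (n:ℝ)^3 ≠ 0 := by positivity
        field_simp
        ring
      rw [hq, hqr]
      have h3q : (3 : ENNReal) * ENNReal.ofReal (4*Real.sqrt 2*p/(π*(n:ℝ)^3))
          = ENNReal.ofReal (3 * (4*Real.sqrt 2*p/(π*(n:ℝ)^3))) := by
        rw [ENNReal.ofReal_mul (by norm_num)]
        norm_num
      rw [h3q, ← ENNReal.ofReal_natCast T.card,
        ← ENNReal.ofReal_mul (by positivity)]
      apply ENNReal.ofReal_le_ofReal
      have hsqrt : Real.sqrt 2 ≤ 1.5 := by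
        rw [show (1.5:ℝ) = Real.sqrt (1.5^2) from (Real.sqrt_sq (by norm_num)).symm]
        exact Real.sqrt_le_sqrt (by norm_num)
      have hc6 : 6 * (T.card:ℝ) ≤ (n:ℝ)^3 := by
        have := card_T6 (n := n)
        calc 6 * (T.card:ℝ) = ((6 * T.card : ℕ) : ℝ) := by push_cast; ring
          _ ≤ ((n^3 : ℕ) : ℝ) := by exact_mod_cast this
          _ = (n:ℝ)^3 := by push_cast; ring
      have hπ := Real.pi_gt_three
      have key : (T.card:ℝ) * (3 * (4*Real.sqrt 2*p/(π*(n:ℝ)^3)))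
          = (12*Real.sqrt 2*(T.card:ℝ)) * p / (π*(n:ℝ)^3) := by ring
      rw [key, div_le_iff₀ (by positivity)]
      have hcard0 : (0:ℝ) ≤ (T.card:ℝ) := Nat.cast_nonneg _
      have h1 : 12*Real.sqrt 2*(T.card:ℝ) ≤ 18*(T.card:ℝ) := by nlinarith
      have h2 : (18:ℝ)*(T.card:ℝ) ≤ 3*(n:ℝ)^3 := by linarith
      have h3 : 3*(n:ℝ)^3 ≤ π*(n:ℝ)^3 := by nlinarith [pow_pos hn0 3]
      nlinarith [mul_le_mul_of_nonneg_right (h1.trans (h2.trans h3)) hp.le]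
    calc ν Gᶜ ≤ T.card • (3 * q) := le_trans step1 step2
      _ = (T.card : ENNReal) * (3 * q) := by rw [nsmul_eq_mul]
      _ ≤ ENNReal.ofReal p := step3
  have hcompl : ν G = 1 - ν Gᶜ := by
    have := MeasureTheory.prob_compl_eq_one_sub (μ := ν) hGmeas.compl
    rw [compl_compl] at this
    exact this
  calc ENNReal.ofReal (1 - p) = 1 - ENNReal.ofReal p := by
        rw [ENNReal.ofReal_sub 1 hp.le, ENNReal.ofReal_one]
    _ ≤ 1 - ν Gᶜ := tsub_le_tsub_left hbad 1
    _ = ν G := hcompl.symm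
end
end

section
/- If a random ordered point set P_x of n points in [0,2]² has no w-flat triple for some w with 0 < w ≤ 1, then there exists a point set P' with integer coordinates in {0,1,...,⌊2/w⌋}² realizing the same order type as P_x; consequently the norm of the order type of P_x is at most ⌊2/w⌋. -/
open MeasureTheory Metric Real

noncomputable section

lemma lineThrough_comm (a b : Pt) : lineThrough a b = lineThrough b a := by
  unfold lineThrough; rw [Set.pair_comm]

lemma mem_line (a b : Pt) (t : ℝ) : a + t • (b - a) ∈ lineThrough a b := by
  have h := AffineMap.lineMap_mem_affineSpan_pair (k := ℝ) t a b
  have e : AffineMap.lineMap a b t = a + t • (b - a) := by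
    simp [AffineMap.lineMap_apply]; abel
  rw [e] at h
  exact h

lemma coordNorm (v : Pt) (a : ℝ) (h : ∀ j, |v j| ≤ a) : ‖v‖ ≤ Real.sqrt 2 * a := by
  have ha : 0 ≤ a := le_trans (abs_nonneg _) (h 0)
  rw [EuclideanSpace.norm_eq]
  have hb : ∑ i, ‖v i‖ ^ 2 ≤ 2 * a ^ 2 := by
    rw [Fin.sum_univ_two]
    simp only [Real.norm_eq_abs]
    nlinarith [h 0, h 1, abs_nonneg (v 0), abs_nonneg (v 1)]
  calc Real.sqrt (∑ i, ‖v i‖ ^ 2) ≤ Real.sqrt (2 * a ^ 2) := Real.sqrt_le_sqrt hb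
    _ = Real.sqrt 2 * a := by
        rw [Real.sqrt_mul (by norm_num), Real.sqrt_sq ha]

lemma dep2 (x y z : Pt) (hxy : x ≠ y) (h : det3 x y z = 0) :
    ∃ s : ℝ, z = x + s • (y - x) := by
  have hcases : y 0 - x 0 ≠ 0 ∨ y 1 - x 1 ≠ 0 := by
    by_contra hc; push_neg at hc
    exact hxy (PiLp.ext (fun i => match i with
      | 0 => by linarith [hc.1]
      | 1 => by linarith [hc.2]))
  unfold det3 at h
  rcases hcases with h0 | h1
  · have hco : ∀ i : Fin 2, z i = x i + (z 0 - x 0) / (y 0 - x 0) * (y i - x i) := by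
      intro i
      match i with
      | 0 => field_simp; ring
      | 1 => field_simp; linear_combination h
    refine ⟨(z 0 - x 0) / (y 0 - x 0), PiLp.ext (fun i => ?_)⟩
    simp only [PiLp.add_apply, PiLp.smul_apply, PiLp.sub_apply, smul_eq_mul]
    exact hco i
  · have hco : ∀ i : Fin 2, z i = x i + (z 1 - x 1) / (y 1 - x 1) * (y i - x i) := by
      intro i
      match i with
      | 0 => field_simp; linear_combination -h
      | 1 => field_simp; ring
    refine ⟨(z 1 - x 1) / (y 1 - x 1), PiLp.ext (fun i => ?_)⟩
    simp only [PiLp.add_apply, PiLp.smul_apply, PiLp.sub_apply, smul_eq_mul]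
    exact hco i

lemma key_dist (δ : ℝ) (p a b x u v : Pt) (t : ℝ) (ht0 : 0 ≤ t) (ht1 : t ≤ 1)
    (hx : ‖x - p‖ ≤ δ) (hu : ‖u - a‖ ≤ δ) (hv : ‖v - b‖ ≤ δ)
    (hcomb : x = u + t • (v - u)) : distLine p a b ≤ 2 * δ := by
  have h1 : distLine p a b ≤ dist p (a + t • (b - a)) :=
    Metric.infDist_le_dist_of_mem (mem_line a b t)
  have h2 : x - (a + t • (b - a)) = (1 - t) • (u - a) + t • (v - b) := by
    rw [hcomb]; module
  have h4 : p - (a + t • (b - a)) = (p - x) + (x - (a + t • (b - a))) := by abel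
  have h5 : ‖x - (a + t • (b - a))‖ ≤ δ := by
    rw [h2]
    calc ‖(1 - t) • (u - a) + t • (v - b)‖
        ≤ ‖(1 - t) • (u - a)‖ + ‖t • (v - b)‖ := norm_add_le _ _
      _ = (1 - t) * ‖u - a‖ + t * ‖v - b‖ := by
          rw [norm_smul, norm_smul, Real.norm_eq_abs, Real.norm_eq_abs,
            abs_of_nonneg (by linarith), abs_of_nonneg ht0]
      _ ≤ (1 - t) * δ + t * δ := by
          have hδ : 0 ≤ δ := le_trans (norm_nonneg _) hx
          have h1t : (0:ℝ) ≤ 1 - t := by linarith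
          gcongr
      _ = δ := by ring
  calc distLine p a b ≤ dist p (a + t • (b - a)) := h1
    _ = ‖p - (a + t • (b - a))‖ := dist_eq_norm _ _
    _ ≤ ‖p - x‖ + ‖x - (a + t • (b - a))‖ := by rw [h4]; exact norm_add_le _ _
    _ ≤ δ + δ := by rw [norm_sub_rev]; exact add_le_add hx h5
    _ = 2 * δ := by ring

lemma flat_of_collinear (w : ℝ) (hw : 0 < w) (p q r x y z : Pt)
    (hx : ‖x - p‖ ≤ Real.sqrt 2 * w / 2) (hy : ‖y - q‖ ≤ Real.sqrt 2 * w / 2)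
    (hz : ‖z - r‖ ≤ Real.sqrt 2 * w / 2) (hdet : det3 x y z = 0) : WFlat w p q r := by
  set δ := Real.sqrt 2 * w / 2 with hδdef
  have h2δ : 2 * δ = Real.sqrt 2 * w := by rw [hδdef]; ring
  by_cases hxy : x = y
  · left
    have h := key_dist δ p q r x y z 0 le_rfl zero_le_one hx hy hz (by rw [hxy]; module)
    rwa [h2δ] at h
  · obtain ⟨s, hs⟩ := dep2 x y z hxy hdet
    rcases le_or_gt 0 s with hs0 | hs0
    · rcases le_or_gt s 1 with hs1 | hs1
      · right; right
        have h := key_dist δ r p q z x y s hs0 hs1 hz hx hy hs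
        rwa [h2δ] at h
      · right; left
        have hsne : (0:ℝ) < s := by linarith
        have hy' : y = x + (1 / s) • (z - x) := by
          rw [hs]
          have : (x + s • (y - x)) - x = s • (y - x) := by abel
          rw [this, smul_smul, one_div, inv_mul_cancel₀ (ne_of_gt hsne), one_smul]
          abel
        have ht0 : 0 ≤ 1 / s := by positivity
        have ht1 : 1 / s ≤ 1 := by rw [div_le_one hsne]; linarith
        have h := key_dist δ q p r y x z (1 / s) ht0 ht1 hy hx hz hy'
        rwa [h2δ] at h
    · left
      have hs1 : s - 1 < 0 := by linarith
      have h1s : s - 1 ≠ 0 := ne_of_lt hs1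
      set t := s / (s - 1) with htdef
      have ht0 : 0 ≤ t := le_of_lt (div_pos_of_neg_of_neg hs0 hs1)
      have ht1 : t ≤ 1 := by
        rw [htdef, div_le_one_iff]; right; right; constructor <;> linarith
      have hts : (s - 1) * t = s := by rw [htdef]; field_simp
      have hx' : x = z + t • (y - z) := by
        apply smul_right_injective Pt h1s
        show (s - 1) • x = (s - 1) • (z + t • (y - z))
        rw [smul_add, smul_smul, hts, hs]
        module
      have h := key_dist δ p r q x z y t ht0 ht1 hx hz hy hx'
      rw [h2δ] at h
      unfold distLine
      rw [lineThrough_comm]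
      exact h

lemma det_pos_preserved (w : ℝ) (hw : 0 < w) (p q r p' q' r' : Pt)
    (hnf : ¬ WFlat w p q r)
    (hp : ‖p' - p‖ ≤ Real.sqrt 2 * w / 2) (hq : ‖q' - q‖ ≤ Real.sqrt 2 * w / 2)
    (hr : ‖r' - r‖ ≤ Real.sqrt 2 * w / 2)
    (hpos : 0 < det3 p q r) : 0 < det3 p' q' r' := by
  set δ := Real.sqrt 2 * w / 2 with hδdef
  have hδ0 : 0 ≤ δ := by positivity
  set f : ℝ → ℝ := fun t => det3 (p + t • (p' - p)) (q + t • (q' - q)) (r + t • (r' - r))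
    with hfdef
  have hmove : ∀ (a a' : Pt), ‖a' - a‖ ≤ δ → ∀ t ∈ Set.Icc (0:ℝ) 1,
      ‖(a + t • (a' - a)) - a‖ ≤ δ := by
    intro a a' ha t ht
    have : (a + t • (a' - a)) - a = t • (a' - a) := by abel
    rw [this, norm_smul, Real.norm_eq_abs, abs_of_nonneg ht.1]
    calc t * ‖a' - a‖ ≤ 1 * δ := by
          apply mul_le_mul ht.2 ha (norm_nonneg _) zero_le_one
      _ = δ := one_mul δ
  have hne : ∀ t ∈ Set.Icc (0:ℝ) 1, f t ≠ 0 := by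
    intro t ht h0
    exact hnf (flat_of_collinear w hw p q r _ _ _
      (hmove p p' hp t ht) (hmove q q' hq t ht) (hmove r r' hr t ht) h0)
  have hf0 : f 0 = det3 p q r := by simp [hfdef]
  have hf1 : f 1 = det3 p' q' r' := by simp [hfdef]
  have hcont : Continuous f := by
    have hfe : f = fun t =>
        ((q 0 + t * (q' 0 - q 0)) - (p 0 + t * (p' 0 - p 0))) *
          ((r 1 + t * (r' 1 - r 1)) - (p 1 + t * (p' 1 - p 1))) -
        ((q 1 + t * (q' 1 - q 1)) - (p 1 + t * (p' 1 - p 1))) *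
          ((r 0 + t * (r' 0 - r 0)) - (p 0 + t * (p' 0 - p 0))) := by
      funext t
      simp only [hfdef, det3, PiLp.add_apply, PiLp.smul_apply, PiLp.sub_apply, smul_eq_mul]
    rw [hfe]; fun_prop
  by_contra hneg
  push_neg at hneg
  have hf1le : f 1 ≤ 0 := by rw [hf1]; exact hneg
  have hlt : f 1 < 0 := by
    rcases lt_or_eq_of_le hf1le with h | h
    · exact h
    · exact absurd h (hne 1 (by norm_num))
  have hsub := intermediate_value_Icc' (by norm_num : (0:ℝ) ≤ 1) hcont.continuousOn
  have h0mem : (0:ℝ) ∈ Set.Icc (f 1) (f 0) := ⟨le_of_lt hlt, by rw [hf0]; exact le_of_lt hpos⟩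
  obtain ⟨t, ht, hft⟩ := hsub h0mem
  exact hne t ht hft

lemma det3_swap (a b c : Pt) : det3 b a c = - det3 a b c := by unfold det3; ring

lemma wflat_swap (w : ℝ) (p q r : Pt) (h : ¬ WFlat w p q r) : ¬ WFlat w q p r := by
  unfold WFlat at *
  unfold distLine at *
  rw [lineThrough_comm q p]
  tauto

lemma sign_mul_pos (a d : ℝ) (ha : 0 < a) : Real.sign (a * d) = Real.sign d := by
  rcases lt_trichotomy d 0 with h | h | h
  · rw [Real.sign_of_neg h, Real.sign_of_neg (mul_neg_of_pos_of_neg ha h)]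
  · rw [h, mul_zero]
  · rw [Real.sign_of_pos h, Real.sign_of_pos (mul_pos ha h)]

lemma ori_preserved (w : ℝ) (hw : 0 < w) (p q r p' q' r' : Pt)
    (hnf : ¬ WFlat w p q r)
    (hp : ‖p' - p‖ ≤ Real.sqrt 2 * w / 2) (hq : ‖q' - q‖ ≤ Real.sqrt 2 * w / 2)
    (hr : ‖r' - r‖ ≤ Real.sqrt 2 * w / 2) : ori p' q' r' = ori p q r := by
  rcases lt_trichotomy (det3 p q r) 0 with h | h | h
  · have h1 : 0 < det3 q p r := by rw [det3_swap]; linarith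
    have h2 := det_pos_preserved w hw q p r q' p' r' (wflat_swap w p q r hnf) hq hp hr h1
    rw [det3_swap] at h2
    rw [ori, ori, Real.sign_of_neg h, Real.sign_of_neg (by linarith)]
  · exfalso
    exact hnf (flat_of_collinear w hw p q r p q r
      (by simp; positivity) (by simp; positivity) (by simp; positivity) h)
  · have h2 := det_pos_preserved w hw p q r p' q' r' hnf hp hq hr h
    rw [ori, ori, Real.sign_of_pos h, Real.sign_of_pos h2]

lemma det3_degen₁ (a c : Pt) : det3 a a c = 0 := by unfold det3; ring
lemma det3_degen₂ (a b : Pt) : det3 a b a = 0 := by unfold det3; ring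
lemma det3_degen₃ (a b : Pt) : det3 a b b = 0 := by unfold det3; ring

theorem stmt16 (n : ℕ) (P : Fin n → Pt) (hbox : ∀ i, ∀ j : Fin 2, P i j ∈ Set.Icc (0:ℝ) 2)
    (w : ℝ) (hw : 0 < w) (hw1 : w ≤ 1)
    (hflat : ∀ i j k : Fin n, i ≠ j → j ≠ k → i ≠ k → ¬ WFlat w (P i) (P j) (P k)) :
    ∃ Q : Fin n → Fin 2 → ℤ,
      (∀ i, ∀ j : Fin 2, 0 ≤ Q i j ∧ Q i j ≤ ⌊(2:ℝ)/w⌋) ∧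
      (∀ i j k : Fin n,
        ori (WithLp.toLp 2 (fun m => (Q i m : ℝ)) : Pt) (WithLp.toLp 2 (fun m => (Q j m : ℝ)) : Pt)
            (WithLp.toLp 2 (fun m => (Q k m : ℝ)) : Pt) = ori (P i) (P j) (P k)) := by
  have hm1 : ((⌊(2:ℝ)/w⌋ : ℤ) : ℝ) ≤ 2 / w := Int.floor_le _
  have hm2 : 2 / w < (⌊(2:ℝ)/w⌋ : ℤ) + 1 := Int.lt_floor_add_one _
  set m : ℤ := ⌊(2:ℝ)/w⌋ with hmdef
  have hmw : (m:ℝ) * w ≤ 2 := by rw [le_div_iff₀ hw] at hm1; linarith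
  have hmw2 : 2 < ((m:ℝ) + 1) * w := by
    rw [div_lt_iff₀ hw] at hm2
    push_cast at hm2 ⊢
    nlinarith
  set c : ℝ := (2 - (m:ℝ) * w) / 2 with hcdef
  have hc0 : 0 ≤ c := by rw [hcdef]; linarith
  have hcw : c ≤ w / 2 := by rw [hcdef]; nlinarith
  refine ⟨fun i j => round ((P i j - c) / w), ?_, ?_⟩
  · intro i j
    obtain ⟨hP0, hP2⟩ := hbox i j
    constructor
    · show 0 ≤ round ((P i j - c) / w)
      rw [round_eq, Int.le_floor]
      have hh : -(1/2 : ℝ) ≤ (P i j - c) / w := by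
        rw [le_div_iff₀ hw]; linarith
      push_cast
      linarith
    · show round ((P i j - c) / w) ≤ m
      rw [round_eq, ← Int.lt_add_one_iff, Int.floor_lt]
      have hh : (P i j - c) / w < (m:ℝ) + 1/2 := by
        rw [div_lt_iff₀ hw]; nlinarith
      push_cast
      linarith
  · set Qp : Fin n → Pt := fun i => WithLp.toLp 2 (fun l => (round ((P i l - c) / w) : ℝ)) with hQdef
    set P' : Fin n → Pt := fun i => WithLp.toLp 2 (fun l => c + w * (round ((P i l - c) / w) : ℝ))
      with hPdef
    have hdet : ∀ a b d : Fin n, det3 (P' a) (P' b) (P' d) = w^2 * det3 (Qp a) (Qp b) (Qp d) := by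
      intro a b d
      simp only [hPdef, hQdef, det3, PiLp.toLp_apply]
      ring
    have hmove : ∀ a : Fin n, ‖P' a - P a‖ ≤ Real.sqrt 2 * w / 2 := by
      intro a
      have hcoord : ∀ l, |(P' a - P a) l| ≤ w / 2 := by
        intro l
        have e1 : (P' a - P a) l = c + w * (round ((P a l - c)/w) : ℝ) - P a l := by
          simp [hPdef, PiLp.sub_apply]
        have e2 : c + w * (round ((P a l - c)/w) : ℝ) - P a l
            = w * ((round ((P a l - c)/w) : ℝ) - (P a l - c)/w) := by
          field_simp
          ring
        rw [e1, e2, abs_mul, abs_of_pos hw]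
        have h3 : |(round ((P a l - c)/w) : ℝ) - (P a l - c)/w| ≤ 1/2 := by
          rw [abs_sub_comm]; exact abs_sub_round _
        nlinarith
      calc ‖P' a - P a‖ ≤ Real.sqrt 2 * (w/2) := coordNorm _ _ hcoord
        _ = Real.sqrt 2 * w / 2 := by ring
    have key : ∀ a b d : Fin n, ori (Qp a) (Qp b) (Qp d) = ori (P a) (P b) (P d) := by
      intro a b d
      by_cases hab : a = b
      · subst hab; rw [ori, ori, det3_degen₁, det3_degen₁]
      by_cases hbd : b = d
      · subst hbd; rw [ori, ori, det3_degen₃, det3_degen₃]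
      by_cases had : a = d
      · subst had; rw [ori, ori, det3_degen₂, det3_degen₂]
      have hnf := hflat a b d hab hbd had
      have h1 : ori (P' a) (P' b) (P' d) = ori (P a) (P b) (P d) :=
        ori_preserved w hw _ _ _ _ _ _ hnf (hmove a) (hmove b) (hmove d)
      have h2 : ori (P' a) (P' b) (P' d) = ori (Qp a) (Qp b) (Qp d) := by
        rw [ori, hdet a b d, sign_mul_pos _ _ (by positivity)]; rfl
      rw [← h2, h1]
    intro i j k
    exact key i j k
end
end
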